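/- arXiv:1403.3106 — 3 statements merged into one kernel-verified Lean document; each statement's English description precedes it below -/
import Mathlib

section
/- Let G be a separable metrisable topological group and U a symmetric open neighbourhood of the identity. Then there is a compatible left-invariant metric d on G such that for every subset A ⊆ G the following are equivalent: (1) A has finite d-diameter; (2) there are a finite subset F ⊆ G and some k ≥ 1 so that A ⊆ (FU)^k. -/
open Filter Topology
open scoped Pointwise NNReal
set_option linter.unusedSectionVars false
set_option maxHeartbeats 1000000


open scoped Pointwise

/-- A (plain) metric given as a distance function. -/
def IsMetric {G : Type*} (d : G → G → ℝ) : Prop :=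
  (∀ x y, d x y = 0 ↔ x = y) ∧ (∀ x y, d x y = d y x) ∧ ∀ x y z, d x z ≤ d x y + d y z

/-- The metric `d` induces the topology of `G`. -/
def IsCompatible (G : Type*) [TopologicalSpace G] (d : G → G → ℝ) : Prop :=
  ∀ (x : G) (s : Set G), s ∈ nhds x ↔ ∃ ε > (0 : ℝ), {y : G | d x y < ε} ⊆ s

/-- A compatible left-invariant metric on a topological group. -/
def IsCompatibleLeftInvariantMetric (G : Type*) [Group G] [TopologicalSpace G]
    (d : G → G → ℝ) : Prop :=
  IsMetric d ∧ IsCompatible G d ∧ ∀ h g f : G, d (h * g) (h * f) = d g f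

/-- A set has finite diameter with respect to `d`. -/
def FiniteDiam {G : Type*} (d : G → G → ℝ) (A : Set G) : Prop :=
  ∃ C : ℝ, ∀ x ∈ A, ∀ y ∈ A, d x y ≤ C

/-- `A` has property (OB) relative to `G`: finite diameter for every compatible
left-invariant metric. -/
def HasRelPropOB (G : Type*) [Group G] [TopologicalSpace G] (A : Set G) : Prop :=
  ∀ d : G → G → ℝ, IsCompatibleLeftInvariantMetric G d → FiniteDiam d A

/-- A sequence tends to infinity in `G` if some compatible left-invariant metric
witnesses `d (g n) 1 → ∞`. -/
def TendsToInfinity (G : Type*) [Group G] [TopologicalSpace G] (g : ℕ → G) : Prop :=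
  ∃ d : G → G → ℝ, IsCompatibleLeftInvariantMetric G d ∧
    Filter.Tendsto (fun n => d (g n) 1) Filter.atTop Filter.atTop

/-- A compatible left-invariant metric is metrically proper if `d (g n) 1 → ∞`
whenever `g n → ∞`. -/
def MetricallyProperMetric (G : Type*) [Group G] [TopologicalSpace G]
    (d : G → G → ℝ) : Prop :=
  ∀ g : ℕ → G, TendsToInfinity G g →
    Filter.Tendsto (fun n => d (g n) 1) Filter.atTop Filter.atTop

section
variable {G : Type*} [Group G] {V : ℕ → Set G}

def chainSum (e : G → G → ℝ≥0) (x : G) (l : List G) (y : G) : ℝ≥0 :=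
  ((x :: l).zipWith e (l ++ [y])).sum

@[simp] lemma chainSum_nil (e : G → G → ℝ≥0) (x y : G) : chainSum e x [] y = e x y := by
  simp [chainSum]

@[simp] lemma chainSum_cons (e : G → G → ℝ≥0) (x a : G) (l : List G) (y : G) :
    chainSum e x (a :: l) y = e x a + chainSum e a l y := by
  simp [chainSum]

noncomputable def cdist (e : G → G → ℝ≥0) (x y : G) : ℝ≥0 := ⨅ l : List G, chainSum e x l y

lemma dist_ofPreNNDist_eq (e : G → G → ℝ≥0) (h1 : ∀ x, e x x = 0) (h2 : ∀ x y, e x y = e y x)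
    (x y : G) :
    @dist G (PseudoMetricSpace.ofPreNNDist e h1 h2).toDist x y = ↑(cdist e x y) := by
  rw [PseudoMetricSpace.dist_ofPreNNDist]; rfl

lemma cdist_le_chainSum (e : G → G → ℝ≥0) (x : G) (l : List G) (y : G) :
    cdist e x y ≤ chainSum e x l y := ciInf_le (OrderBot.bddBelow _) l

lemma cdist_le (e : G → G → ℝ≥0) (x y : G) : cdist e x y ≤ e x y := by
  simpa using cdist_le_chainSum e x [] y

lemma exists_chain_of_cdist_lt {e : G → G → ℝ≥0} {x y : G} {c : ℝ≥0}
    (h : cdist e x y < c) : ∃ l : List G, chainSum e x l y < c :=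
  exists_lt_of_ciInf_lt h

lemma cdist_triangle (e : G → G → ℝ≥0) (h1 : ∀ x, e x x = 0) (h2 : ∀ x y, e x y = e y x)
    (x y z : G) : cdist e x z ≤ cdist e x y + cdist e y z := by
  have := (PseudoMetricSpace.ofPreNNDist e h1 h2).dist_triangle x y z
  rw [dist_ofPreNNDist_eq, dist_ofPreNNDist_eq, dist_ofPreNNDist_eq] at this
  exact_mod_cast this

lemma cdist_comm (e : G → G → ℝ≥0) (h1 : ∀ x, e x x = 0) (h2 : ∀ x y, e x y = e y x)
    (x y : G) : cdist e x y = cdist e y x := by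
  have := (PseudoMetricSpace.ofPreNNDist e h1 h2).dist_comm x y
  rw [dist_ofPreNNDist_eq, dist_ofPreNNDist_eq] at this
  exact_mod_cast this

lemma cdist_self (e : G → G → ℝ≥0) (h1 : ∀ x, e x x = 0) (x y : G) : cdist e x x = 0 := by
  have h := cdist_le e x x
  simpa [h1 x] using h

lemma chainSum_map (e : G → G → ℝ≥0) (h : G) (he : ∀ a b, e (h*a) (h*b) = e a b) :
    ∀ (l : List G) (x y : G),
      chainSum e (h*x) (l.map (h * ·)) (h*y) = chainSum e x l y := by
  intro l
  induction l with
  | nil => intro x y; simp [he]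
  | cons a l ih => intro x y; simp [he, ih]

lemma cdist_invariant (e : G → G → ℝ≥0) (he : ∀ h a b, e (h*a) (h*b) = e a b) (h x y : G) :
    cdist e (h*x) (h*y) = cdist e x y := by
  have key : ∀ (h x y : G), cdist e (h*x) (h*y) ≤ cdist e x y := by
    intro h x y
    refine le_ciInf fun l => ?_
    calc cdist e (h*x) (h*y) ≤ chainSum e (h*x) (l.map (h * ·)) (h*y) :=
          cdist_le_chainSum _ _ _ _
      _ = chainSum e x l y := chainSum_map e h (he h) l x y
  refine le_antisymm (key h x y) ?_
  have := key h⁻¹ (h*x) (h*y)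
  simpa using this


open Classical in
noncomputable def rosD0 (V : ℕ → Set G) (x y : G) : ℝ≥0 :=
  if h : ∀ n, x⁻¹ * y ∈ V n then 0
  else 2⁻¹ ^ (Nat.find (not_forall.mp h))

variable (hV1 : ∀ n, (1:G) ∈ V n) (hVsym : ∀ n, (V n)⁻¹ = V n)
  (hVmul : ∀ n, V (n+1) * V (n+1) * V (n+1) ⊆ V n)

lemma half_lt_one : (2⁻¹ : ℝ≥0) < 1 := by
  rw [← NNReal.coe_lt_coe]; push_cast; norm_num

lemma half_pos' : (0 : ℝ≥0) < 2⁻¹ := by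
  rw [← NNReal.coe_lt_coe]; push_cast; norm_num

include hV1 hVmul in
lemma V_anti : Antitone V := by
  refine antitone_nat_of_succ_le fun n => ?_
  intro g hg
  have : g * 1 * 1 ∈ V (n+1) * V (n+1) * V (n+1) :=
    Set.mul_mem_mul (Set.mul_mem_mul hg (hV1 (n+1))) (hV1 (n+1))
  simpa using hVmul n this

include hV1 hVmul in
lemma V_mono {m n : ℕ} (h : m ≤ n) : V n ⊆ V m := V_anti hV1 hVmul h

lemma natFind_eq_natFind {p q : ℕ → Prop} [DecidablePred p] [DecidablePred q]
    (hp : ∃ n, p n) (hq : ∃ n, q n) (h : ∀ n, p n ↔ q n) :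
    Nat.find hp = Nat.find hq :=
  le_antisymm (Nat.find_le ((h _).mpr (Nat.find_spec hq)))
    (Nat.find_le ((h _).mp (Nat.find_spec hp)))

include hV1 in
lemma rosD0_self (x : G) : rosD0 V x x = 0 := by
  classical
  simp [rosD0, hV1]

include hVsym in
lemma rosD0_comm (x y : G) : rosD0 V x y = rosD0 V y x := by
  have hmem : ∀ n, (x⁻¹ * y ∈ V n ↔ y⁻¹ * x ∈ V n) := by
    intro n
    have h2 : ∀ a b : G, a⁻¹ * b ∈ V n → b⁻¹ * a ∈ V n := by
      intro a b h
      have : (a⁻¹ * b)⁻¹ ∈ (V n)⁻¹ := Set.inv_mem_inv.mpr h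
      rw [hVsym] at this; simpa [mul_inv_rev] using this
    exact ⟨h2 x y, h2 y x⟩
  classical
  unfold rosD0
  by_cases h : ∀ n, x⁻¹ * y ∈ V n
  · have h' : ∀ n, y⁻¹ * x ∈ V n := fun n => (hmem n).mp (h n)
    simp [h, h']
  · have h' : ¬ ∀ n, y⁻¹ * x ∈ V n := fun hc => h fun n => (hmem n).mpr (hc n)
    simp only [h, h', dif_neg, not_false_iff]
    congr 1
    exact natFind_eq_natFind _ _ (fun n => not_congr (hmem n))

include hV1 hVmul in
lemma rosD0_le_iff {x y : G} {k : ℕ} :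
    rosD0 V x y ≤ 2⁻¹ ^ (k+1) ↔ x⁻¹ * y ∈ V k := by
  classical
  constructor
  · intro h
    unfold rosD0 at h
    split at h
    · exact ‹∀ n, x⁻¹ * y ∈ V n› k
    · rename_i hna
      have hexp : k + 1 ≤ Nat.find (not_forall.mp hna) := by
        by_contra hc
        push_neg at hc
        have : (2⁻¹ : ℝ≥0) ^ (k+1) < 2⁻¹ ^ (Nat.find (not_forall.mp hna)) :=
          pow_lt_pow_right_of_lt_one₀ half_pos' half_lt_one (by omega)
        exact absurd h (not_le.mpr this)
      have hlt : k < Nat.find (not_forall.mp hna) := by omega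
      exact not_not.mp (Nat.find_min (not_forall.mp hna) hlt)
  · intro h
    unfold rosD0
    split
    · exact zero_le
    · rename_i hna
      have hexp : k + 1 ≤ Nat.find (not_forall.mp hna) := by
        by_contra hc
        push_neg at hc
        have hk : Nat.find (not_forall.mp hna) ≤ k := by omega
        exact Nat.find_spec (not_forall.mp hna) (V_mono hV1 hVmul hk h)
      exact pow_le_pow_of_le_one (zero_le) half_lt_one.le hexp

lemma rosD0_le_one (x y : G) : rosD0 V x y ≤ 1 := by
  classical
  unfold rosD0
  split
  · exact zero_le_one
  · exact pow_le_one₀ (zero_le) half_lt_one.le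

lemma rosD0_eq_zero_iff {x y : G} : rosD0 V x y = 0 ↔ ∀ n, x⁻¹ * y ∈ V n := by
  classical
  unfold rosD0
  split
  · simpa
  · rename_i h
    simp only [h, iff_false]
    positivity

lemma rosD0_cases (x y : G) : rosD0 V x y = 0 ∨ ∃ K, rosD0 V x y = 2⁻¹ ^ K := by
  classical
  unfold rosD0
  split
  · exact Or.inl rfl
  · exact Or.inr ⟨_, rfl⟩

include hV1 hVmul in
lemma rosD0_chain (x₁ x₂ x₃ x₄ : G) :
    rosD0 V x₁ x₄ ≤ 2 * max (rosD0 V x₁ x₂) (max (rosD0 V x₂ x₃) (rosD0 V x₃ x₄)) := by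
  classical
  set M := max (rosD0 V x₁ x₂) (max (rosD0 V x₂ x₃) (rosD0 V x₃ x₄)) with hM
  have h1 : rosD0 V x₁ x₂ ≤ M := le_max_left _ _
  have h2 : rosD0 V x₂ x₃ ≤ M := le_trans (le_max_left _ _) (le_max_right _ _)
  have h3 : rosD0 V x₃ x₄ ≤ M := le_trans (le_max_right _ _) (le_max_right _ _)
  have hprod : ∀ j : ℕ, x₁⁻¹ * x₂ ∈ V (j+1) → x₂⁻¹ * x₃ ∈ V (j+1) → x₃⁻¹ * x₄ ∈ V (j+1) →
      x₁⁻¹ * x₄ ∈ V j := by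
    intro j a b c
    have : (x₁⁻¹ * x₂) * (x₂⁻¹ * x₃) * (x₃⁻¹ * x₄) ∈ V (j+1) * V (j+1) * V (j+1) :=
      Set.mul_mem_mul (Set.mul_mem_mul a b) c
    have heq : (x₁⁻¹ * x₂) * (x₂⁻¹ * x₃) * (x₃⁻¹ * x₄) = x₁⁻¹ * x₄ := by group
    rw [heq] at this
    exact hVmul j this
  rcases le_or_gt (2⁻¹ : ℝ≥0) M with hc | hc
  · calc rosD0 V x₁ x₄ ≤ 1 := rosD0_le_one _ _
      _ = 2 * 2⁻¹ := by norm_num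
      _ ≤ 2 * M := mul_le_mul_right hc 2
  · rcases eq_or_lt_of_le (zero_le : 0 ≤ M) with hM0 | hM0
    · -- M = 0
      have e1 : rosD0 V x₁ x₂ = 0 := le_antisymm (hM0 ▸ h1) (zero_le)
      have e2 : rosD0 V x₂ x₃ = 0 := le_antisymm (hM0 ▸ h2) (zero_le)
      have e3 : rosD0 V x₃ x₄ = 0 := le_antisymm (hM0 ▸ h3) (zero_le)
      have : rosD0 V x₁ x₄ = 0 := by
        rw [rosD0_eq_zero_iff]
        intro n
        exact hprod n ((rosD0_eq_zero_iff.mp e1) (n+1)) ((rosD0_eq_zero_iff.mp e2) (n+1))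
          ((rosD0_eq_zero_iff.mp e3) (n+1))
      simp [this]
    · -- 0 < M < 2⁻¹ ; M is attained and equals 2⁻¹ ^ K with K ≥ 2
      have hMattained : ∃ K : ℕ, M = 2⁻¹ ^ K := by
        have : M = rosD0 V x₁ x₂ ∨ M = rosD0 V x₂ x₃ ∨ M = rosD0 V x₃ x₄ := by
          rcases max_choice (rosD0 V x₁ x₂) (max (rosD0 V x₂ x₃) (rosD0 V x₃ x₄)) with h | h
          · exact Or.inl (hM.trans h)
          · rcases max_choice (rosD0 V x₂ x₃) (rosD0 V x₃ x₄) with h' | h'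
            · exact Or.inr (Or.inl ((hM.trans h).trans h'))
            · exact Or.inr (Or.inr ((hM.trans h).trans h'))
        rcases this with h | h | h <;>
        · rw [h]
          rcases rosD0_cases (V := V) _ _ with h0 | hK
          · rw [h0] at h; rw [h] at hM0; simp at hM0
          · exact hK
      obtain ⟨K, hK⟩ := hMattained
      have hK2 : 2 ≤ K := by
        by_contra hc2
        push_neg at hc2
        have h1K : K ≤ 1 := by omega
        have : (2⁻¹:ℝ≥0) ^ 1 ≤ 2⁻¹ ^ K := pow_le_pow_of_le_one (zero_le) half_lt_one.le h1K
        rw [pow_one] at this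
        rw [hK] at hc
        exact absurd (lt_of_le_of_lt this hc) (lt_irrefl _)
      obtain ⟨j, rfl⟩ : ∃ j, K = j + 2 := ⟨K - 2, by omega⟩
      have hVmem : x₁⁻¹ * x₄ ∈ V j := by
        refine hprod j ?_ ?_ ?_
        · exact (rosD0_le_iff hV1 hVmul).mp (le_trans h1 (le_of_eq hK))
        · exact (rosD0_le_iff hV1 hVmul).mp (le_trans h2 (le_of_eq hK))
        · exact (rosD0_le_iff hV1 hVmul).mp (le_trans h3 (le_of_eq hK))
      have hle : rosD0 V x₁ x₄ ≤ 2⁻¹ ^ (j+1) := by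
        rw [rosD0_le_iff hV1 hVmul]; exact hVmem
      calc rosD0 V x₁ x₄ ≤ 2⁻¹ ^ (j+1) := hle
        _ = 2 * 2⁻¹ ^ (j+2) := by
            have h2 : (2:ℝ≥0) * 2⁻¹ = 1 := by
              rw [mul_inv_cancel₀]; · rw [← NNReal.coe_ne_zero]; push_cast; norm_num
            calc (2⁻¹:ℝ≥0) ^ (j+1) = (2 * 2⁻¹) * 2⁻¹ ^ (j+1) := by rw [h2, one_mul]
              _ = 2 * (2⁻¹ ^ (j+1) * 2⁻¹) := by ring
              _ = 2 * 2⁻¹ ^ (j+2) := by rw [← pow_succ]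
        _ = 2 * M := by rw [hK]

include hV1 hVsym in
lemma cdistr_self (x : G) : cdist (rosD0 V) x x = 0 := cdist_self _ (rosD0_self hV1) x x

include hV1 hVsym in
lemma cdistr_comm (x y : G) : cdist (rosD0 V) x y = cdist (rosD0 V) y x :=
  cdist_comm _ (rosD0_self hV1) (rosD0_comm hVsym) x y

include hV1 hVsym in
lemma cdistr_triangle (x y z : G) :
    cdist (rosD0 V) x z ≤ cdist (rosD0 V) x y + cdist (rosD0 V) y z :=
  cdist_triangle _ (rosD0_self hV1) (rosD0_comm hVsym) x y z

lemma rosD0_congr {x y a b : G} (e : x⁻¹ * y = a⁻¹ * b) : rosD0 V x y = rosD0 V a b := by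
  classical
  have hmem : ∀ n, (x⁻¹ * y ∈ V n ↔ a⁻¹ * b ∈ V n) := fun n => by rw [e]
  unfold rosD0
  by_cases h : ∀ n, x⁻¹ * y ∈ V n
  · have h' : ∀ n, a⁻¹ * b ∈ V n := fun n => (hmem n).mp (h n)
    simp [h, h']
  · have h' : ¬ ∀ n, a⁻¹ * b ∈ V n := fun hc => h fun n => (hmem n).mpr (hc n)
    simp only [h, h', dif_neg, not_false_iff]
    congr 1
    exact natFind_eq_natFind _ _ (fun n => not_congr (hmem n))

lemma rosD0_invariant (h x y : G) : rosD0 V (h*x) (h*y) = rosD0 V x y :=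
  rosD0_congr (by group)

lemma cdistr_invariant (h x y : G) :
    cdist (rosD0 V) (h*x) (h*y) = cdist (rosD0 V) x y :=
  cdist_invariant _ (fun h a b => rosD0_invariant h a b) h x y

include hV1 hVsym hVmul in
lemma rosD0_le_two_mul_cdistr (x y : G) : rosD0 V x y ≤ 2 * cdist (rosD0 V) x y := by
  have := PseudoMetricSpace.le_two_mul_dist_ofPreNNDist (rosD0 V) (rosD0_self hV1)
    (rosD0_comm hVsym) (fun a b c d => rosD0_chain hV1 hVmul a b c d) x y
  rw [dist_ofPreNNDist_eq] at this
  have h2 : ((2 * cdist (rosD0 V) x y : ℝ≥0) : ℝ) = 2 * (cdist (rosD0 V) x y : ℝ) := by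
    push_cast; ring
  rw [← NNReal.coe_le_coe, h2]
  exact this

include hV1 hVsym hVmul in
lemma mem_V_of_cdistr_le {x y : G} {k : ℕ} (h : cdist (rosD0 V) x y ≤ 2⁻¹ ^ (k+2)) :
    x⁻¹ * y ∈ V k := by
  refine (rosD0_le_iff hV1 hVmul).mp ?_
  calc rosD0 V x y ≤ 2 * cdist (rosD0 V) x y := rosD0_le_two_mul_cdistr hV1 hVsym hVmul x y
    _ ≤ 2 * 2⁻¹ ^ (k+2) := mul_le_mul_right h 2
    _ = 2⁻¹ ^ (k+1) := by
        have h2 : (2:ℝ≥0) * 2⁻¹ = 1 := by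
          rw [mul_inv_cancel₀]; rw [← NNReal.coe_ne_zero]; push_cast; norm_num
        calc (2:ℝ≥0) * 2⁻¹ ^ (k+2) = 2 * (2⁻¹ ^ (k+1) * 2⁻¹) := by rw [pow_succ]
          _ = (2 * 2⁻¹) * 2⁻¹ ^ (k+1) := by ring
          _ = 2⁻¹ ^ (k+1) := by rw [h2, one_mul]

include hV1 hVmul in
lemma cdistr_le_of_mem_V {x y : G} {k : ℕ} (h : x⁻¹ * y ∈ V k) :
    cdist (rosD0 V) x y ≤ 2⁻¹ ^ (k+1) :=
  le_trans (cdist_le _ x y) ((rosD0_le_iff hV1 hVmul).mpr h)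

/-! ### The jump premetric -/

def rosSS (U : Set G) (gseq : ℕ → G) (n : ℕ) : Set G :=
  gseq n • (U * U) ∪ (gseq n • (U * U))⁻¹

lemma rosSS_inv (U : Set G) (gseq : ℕ → G) (n : ℕ) :
    (rosSS U gseq n)⁻¹ = rosSS U gseq n := by
  simp only [rosSS, Set.union_inv, inv_inv]
  exact Set.union_comm _ _

open Classical in
noncomputable def rosJmp (U : Set G) (gseq : ℕ → G) (a b : G) : ℕ :=
  if h : ∃ n, a⁻¹ * b ∈ rosSS U gseq n then Nat.find h else 0

open Classical in
noncomputable def rosW (U : Set G) (V : ℕ → Set G) (gseq : ℕ → G) (a b : G) : ℝ≥0 :=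
  if cdist (rosD0 V) a b < 8⁻¹ then
    min (cdist (rosD0 V) a b) (rosJmp U gseq a b + 1)
  else (rosJmp U gseq a b + 1)

variable {U : Set G} {gseq : ℕ → G}

lemma rosJmp_comm (a b : G) : rosJmp U gseq a b = rosJmp U gseq b a := by
  classical
  have hmem : ∀ n, (a⁻¹ * b ∈ rosSS U gseq n ↔ b⁻¹ * a ∈ rosSS U gseq n) := by
    intro n
    have h2 : ∀ c d : G, c⁻¹ * d ∈ rosSS U gseq n → d⁻¹ * c ∈ rosSS U gseq n := by
      intro c d h
      have : (c⁻¹ * d)⁻¹ ∈ (rosSS U gseq n)⁻¹ := Set.inv_mem_inv.mpr h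
      rw [rosSS_inv] at this
      simpa [mul_inv_rev] using this
    exact ⟨h2 a b, h2 b a⟩
  unfold rosJmp
  by_cases h : ∃ n, a⁻¹ * b ∈ rosSS U gseq n
  · have h' : ∃ n, b⁻¹ * a ∈ rosSS U gseq n := ⟨h.choose, (hmem _).mp h.choose_spec⟩
    rw [dif_pos h, dif_pos h']
    exact natFind_eq_natFind _ _ hmem
  · have h' : ¬ ∃ n, b⁻¹ * a ∈ rosSS U gseq n := fun ⟨n, hn⟩ => h ⟨n, (hmem n).mpr hn⟩
    rw [dif_neg h, dif_neg h']

lemma rosJmp_congr {x y a b : G} (e : x⁻¹ * y = a⁻¹ * b) :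
    rosJmp U gseq x y = rosJmp U gseq a b := by
  classical
  have hmem : ∀ n, (x⁻¹ * y ∈ rosSS U gseq n ↔ a⁻¹ * b ∈ rosSS U gseq n) := fun n => by rw [e]
  unfold rosJmp
  by_cases h : ∃ n, x⁻¹ * y ∈ rosSS U gseq n
  · have h' : ∃ n, a⁻¹ * b ∈ rosSS U gseq n := ⟨h.choose, (hmem _).mp h.choose_spec⟩
    rw [dif_pos h, dif_pos h']
    exact natFind_eq_natFind _ _ hmem
  · have h' : ¬ ∃ n, a⁻¹ * b ∈ rosSS U gseq n := fun ⟨n, hn⟩ => h ⟨n, (hmem n).mpr hn⟩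
    rw [dif_neg h, dif_neg h']

lemma rosJmp_invariant (h a b : G) : rosJmp U gseq (h*a) (h*b) = rosJmp U gseq a b :=
  rosJmp_congr (by group)

include hV1 hVsym in
lemma rosW_self (a : G) : rosW U V gseq a a = 0 := by
  have h0 : cdist (rosD0 V) a a = 0 := cdistr_self hV1 hVsym a
  have hpos : (0:ℝ≥0) < 8⁻¹ := by rw [← NNReal.coe_lt_coe]; push_cast; norm_num
  rw [rosW, if_pos (by rw [h0]; exact hpos), h0]
  simp

include hV1 hVsym in
lemma rosW_comm (a b : G) : rosW U V gseq a b = rosW U V gseq b a := by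
  rw [rosW, rosW, cdistr_comm hV1 hVsym a b, rosJmp_comm a b]

lemma rosW_invariant (h a b : G) : rosW U V gseq (h*a) (h*b) = rosW U V gseq a b := by
  rw [rosW, rosW, cdistr_invariant h a b, rosJmp_invariant h a b]

lemma rosW_le_jmp (a b : G) : rosW U V gseq a b ≤ rosJmp U gseq a b + 1 := by
  rw [rosW]; split
  · exact min_le_right _ _
  · exact le_rfl

lemma rosW_le_cdistr {a b : G} (h : cdist (rosD0 V) a b < 8⁻¹) :
    rosW U V gseq a b ≤ cdist (rosD0 V) a b := by
  rw [rosW, if_pos h]; exact min_le_left _ _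

lemma one_le_jmp_add_one (a b : G) : (1:ℝ≥0) ≤ (rosJmp U gseq a b : ℝ≥0) + 1 :=
  le_add_self

lemma cdistr_le_rosW {a b : G} (h : rosW U V gseq a b < 1) :
    cdist (rosD0 V) a b ≤ rosW U V gseq a b := by
  rw [rosW] at h ⊢
  split at h
  · rcases min_cases (cdist (rosD0 V) a b) ((rosJmp U gseq a b : ℝ≥0) + 1) with ⟨he, _⟩ | ⟨he, hle⟩
    · rw [if_pos ‹_›, he]
    · exact absurd (lt_of_le_of_lt (one_le_jmp_add_one a b) (he ▸ h)) (lt_irrefl _)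
  · exact absurd (lt_of_le_of_lt (one_le_jmp_add_one a b) h) (lt_irrefl _)

include hV1 hVsym hVmul in
lemma cdistr_le_chainSum_rosW :
    ∀ (l : List G) (x y : G), chainSum (rosW U V gseq) x l y < 1 →
      cdist (rosD0 V) x y ≤ chainSum (rosW U V gseq) x l y := by
  intro l
  induction l with
  | nil =>
    intro x y hsum
    rw [chainSum_nil] at *
    exact cdistr_le_rosW hsum
  | cons a l ih =>
    intro x y hsum
    rw [chainSum_cons] at *
    have h1 : rosW U V gseq x a < 1 := lt_of_le_of_lt le_self_add hsum
    have h2 : chainSum (rosW U V gseq) a l y < 1 := lt_of_le_of_lt le_add_self hsum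
    calc cdist (rosD0 V) x y ≤ cdist (rosD0 V) x a + cdist (rosD0 V) a y :=
          cdistr_triangle hV1 hVsym x a y
      _ ≤ rosW U V gseq x a + chainSum (rosW U V gseq) a l y :=
          add_le_add (cdistr_le_rosW h1) (ih a y h2)

/-! ### The coarse structure sets -/

def rosWW (U : Set G) (gseq : ℕ → G) (M : ℝ≥0) : Set G :=
  U ∪ ⋃ n ∈ {n : ℕ | (n:ℝ≥0) + 1 ≤ M}, rosSS U gseq n

noncomputable def rosBall (U : Set G) (V : ℕ → Set G) (gseq : ℕ → G) (r : ℝ≥0) : Set G :=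
  {g : G | cdist (rosW U V gseq) 1 g < r}

lemma eightinv_le_quarterpow : (8⁻¹ : ℝ≥0) ≤ 2⁻¹ ^ (0+2) := by
  rw [← NNReal.coe_le_coe]; push_cast; norm_num

lemma eightinv_lt_one : (8⁻¹ : ℝ≥0) < 1 := by
  rw [← NNReal.coe_lt_coe]; push_cast; norm_num

lemma rosJmp_le {a b : G} {n : ℕ} (hmem : a⁻¹ * b ∈ rosSS U gseq n) :
    rosJmp U gseq a b ≤ n := by
  classical
  unfold rosJmp
  rw [dif_pos ⟨n, hmem⟩]
  exact Nat.find_le hmem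

lemma rosJmp_spec {a b : G} (hex : ∃ n, a⁻¹ * b ∈ rosSS U gseq n) :
    a⁻¹ * b ∈ rosSS U gseq (rosJmp U gseq a b) := by
  classical
  unfold rosJmp
  rw [dif_pos hex]
  exact Nat.find_spec hex

include hV1 hVsym hVmul in
lemma rosW_step (hVU : V 0 ⊆ U) (hex : ∀ a b : G, ∃ n, a⁻¹ * b ∈ rosSS U gseq n)
    {a b : G} {M : ℝ≥0} (hw : rosW U V gseq a b ≤ M) : a⁻¹ * b ∈ rosWW U gseq M := by
  rw [rosW] at hw
  split at hw
  · rename_i hsmall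
    exact Or.inl (hVU (mem_V_of_cdistr_le hV1 hVsym hVmul
      (le_trans hsmall.le eightinv_le_quarterpow)))
  · refine Or.inr ?_
    refine Set.mem_biUnion (show ((rosJmp U gseq a b : ℝ≥0) + 1 ≤ M) from hw) ?_
    exact rosJmp_spec (hex a b)

include hV1 hVsym hVmul in
lemma rosW_step' (hVU : V 0 ⊆ U) (hex : ∀ a b : G, ∃ n, a⁻¹ * b ∈ rosSS U gseq n)
    {a b : G} {M : ℝ≥0} (hw : rosW U V gseq a b < M) : a⁻¹ * b ∈ rosWW U gseq M :=
  rosW_step hV1 hVsym hVmul hVU hex hw.le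

lemma cdistw_invariant (h x y : G) :
    cdist (rosW U V gseq) (h*x) (h*y) = cdist (rosW U V gseq) x y :=
  cdist_invariant _ (fun h a b => rosW_invariant h a b) h x y

lemma cdistw_eq_one (x y : G) :
    cdist (rosW U V gseq) x y = cdist (rosW U V gseq) 1 (x⁻¹ * y) := by
  have := cdistw_invariant (U := U) (V := V) (gseq := gseq) x 1 (x⁻¹ * y)
  simp only [mul_one] at this
  rw [← this, mul_inv_cancel_left]

include hV1 hVsym in
lemma one_mem_rosBall {r : ℝ≥0} (hr : 0 < r) : (1:G) ∈ rosBall U V gseq r := by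
  have : cdist (rosW U V gseq) (1:G) 1 = 0 :=
    cdist_self _ (fun a => rosW_self hV1 hVsym a) 1 1
  simp [rosBall, this, hr]

include hV1 hVsym hVmul in
lemma rosSplit (hVU : V 0 ⊆ U) (hex : ∀ a b : G, ∃ n, a⁻¹ * b ∈ rosSS U gseq n) {M : ℝ≥0} :
    ∀ (l : List G) (x y : G) (s t : ℝ≥0), 0 < s → 0 < t →
      chainSum (rosW U V gseq) x l y < s + t → s + t ≤ M →
      x⁻¹ * y ∈ rosBall U V gseq s * rosWW U gseq M * rosBall U V gseq t := by
  intro l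
  induction l with
  | nil =>
    intro x y s t hs ht hsum hM
    rw [chainSum_nil] at hsum
    have hmem : x⁻¹ * y ∈ rosWW U gseq M :=
      rosW_step' hV1 hVsym hVmul hVU hex (lt_of_lt_of_le hsum hM)
    have : (1:G) * (x⁻¹ * y) * 1 ∈ rosBall U V gseq s * rosWW U gseq M * rosBall U V gseq t :=
      Set.mul_mem_mul (Set.mul_mem_mul (one_mem_rosBall hV1 hVsym hs) hmem)
        (one_mem_rosBall hV1 hVsym ht)
    simpa using this
  | cons a l ih =>
    intro x y s t hs ht hsum hM
    rw [chainSum_cons] at hsum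
    rcases lt_or_ge (rosW U V gseq x a) s with hxa | hxa
    · -- absorb the first step into the left ball
      set s' : ℝ≥0 := s - rosW U V gseq x a with hs'
      have hws : rosW U V gseq x a + s' = s := add_tsub_cancel_of_le hxa.le
      have hs'pos : 0 < s' := tsub_pos_of_lt hxa
      have hsum' : chainSum (rosW U V gseq) a l y < s' + t := by
        have h1 : rosW U V gseq x a + chainSum (rosW U V gseq) a l y
            < rosW U V gseq x a + (s' + t) := by
          rw [← add_assoc, hws]; exact hsum
        exact lt_of_add_lt_add_left h1
      have hM' : s' + t ≤ M := le_trans (add_le_add_left (tsub_le_self) t) hM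
      obtain ⟨pq, ⟨p, hp, q, hq, hpq⟩, r, hr, hpqr⟩ := ih a y s' t hs'pos ht hsum' hM'
      refine ⟨(x⁻¹ * a) * p * q, ⟨(x⁻¹ * a) * p, ?_, q, hq, rfl⟩, r, hr, ?_⟩
      · -- (x⁻¹a) * p ∈ ball s
        have hcd : cdist (rosW U V gseq) 1 ((x⁻¹ * a) * p)
            ≤ cdist (rosW U V gseq) 1 (x⁻¹ * a) + cdist (rosW U V gseq) 1 p := by
          have htri := cdist_triangle (rosW U V gseq) (fun a => rosW_self hV1 hVsym a)
            (fun a b => rosW_comm hV1 hVsym a b) 1 (x⁻¹ * a) ((x⁻¹ * a) * p)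
          have hinv : cdist (rosW U V gseq) (x⁻¹ * a) ((x⁻¹ * a) * p)
              = cdist (rosW U V gseq) 1 p := by
            have := cdistw_invariant (U := U) (V := V) (gseq := gseq) (x⁻¹ * a) 1 p
            simpa using this
          rwa [hinv] at htri
        have hxa' : cdist (rosW U V gseq) 1 (x⁻¹ * a) ≤ rosW U V gseq x a := by
          rw [← cdistw_eq_one]
          exact cdist_le _ x a
        have : cdist (rosW U V gseq) 1 ((x⁻¹ * a) * p)
            < rosW U V gseq x a + s' := by
          refine lt_of_le_of_lt hcd ?_
          exact add_lt_add_of_le_of_lt hxa' hp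
        rw [hws] at this
        exact this
      · -- the product identity
        dsimp only at hpq hpqr
        have hay : a⁻¹ * y = p * q * r := by rw [← hpq] at hpqr; exact hpqr.symm
        calc x⁻¹ * a * p * q * r = (x⁻¹ * a) * (p * q * r) := by group
          _ = (x⁻¹ * a) * (a⁻¹ * y) := by rw [← hay]
          _ = x⁻¹ * y := by group
    · -- the first step is a jump covering the left ball
      have hxaM : rosW U V gseq x a < M :=
        lt_of_lt_of_le (lt_of_le_of_lt le_self_add hsum) hM
      have hrest : chainSum (rosW U V gseq) a l y < t := by
        have h1 : s + chainSum (rosW U V gseq) a l y ≤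
            rosW U V gseq x a + chainSum (rosW U V gseq) a l y := add_le_add_left hxa _
        exact lt_of_add_lt_add_left (lt_of_le_of_lt h1 hsum)
      refine ⟨1 * (x⁻¹ * a), ⟨1, one_mem_rosBall hV1 hVsym hs, x⁻¹ * a,
        rosW_step' hV1 hVsym hVmul hVU hex hxaM, rfl⟩, a⁻¹ * y, ?_, by group⟩
      rw [rosBall, Set.mem_setOf_eq, ← cdistw_eq_one]
      exact lt_of_le_of_lt (cdist_le_chainSum _ a l y) hrest

include hV1 hVsym hVmul in
lemma mem_U_of_small (hVU : V 0 ⊆ U) {g : G}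
    (h : cdist (rosW U V gseq) 1 g < 8⁻¹) : g ∈ U := by
  obtain ⟨l, hl⟩ := exists_chain_of_cdist_lt h
  have hl1 : chainSum (rosW U V gseq) 1 l g < 1 := lt_trans hl eightinv_lt_one
  have hcd : cdist (rosD0 V) 1 g < 8⁻¹ :=
    lt_of_le_of_lt (cdistr_le_chainSum_rosW hV1 hVsym hVmul l 1 g hl1) hl
  have := mem_V_of_cdistr_le hV1 hVsym hVmul (le_trans hcd.le eightinv_le_quarterpow)
  simpa using hVU this

include hV1 hVsym hVmul in
lemma rosIter (hVU : V 0 ⊆ U) (hex : ∀ a b : G, ∃ n, a⁻¹ * b ∈ rosSS U gseq n) {M : ℝ≥0} :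
    ∀ (k : ℕ) (g : G), cdist (rosW U V gseq) 1 g < 8⁻¹ + k * 8⁻¹ →
      8⁻¹ + k * 8⁻¹ ≤ M → g ∈ U * (rosWW U gseq M * U) ^ k := by
  intro k
  induction k with
  | zero =>
    intro g hg _
    simp only [Nat.cast_zero, zero_mul, add_zero] at hg
    simpa using mem_U_of_small hV1 hVsym hVmul hVU hg
  | succ k ih =>
    intro g hg hM
    have heq : (8⁻¹ : ℝ≥0) + (k+1 : ℕ) * 8⁻¹ = (8⁻¹ + (k:ℕ) * 8⁻¹) + 8⁻¹ := by
      push_cast; ring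
    rw [heq] at hg hM
    obtain ⟨l, hl⟩ := exists_chain_of_cdist_lt hg
    have hpos2 : (0:ℝ≥0) < 8⁻¹ := by
      rw [← NNReal.coe_lt_coe]; push_cast; norm_num
    have hpos1 : (0:ℝ≥0) < 8⁻¹ + (k:ℕ) * 8⁻¹ := lt_of_lt_of_le hpos2 le_self_add
    have hsplit := rosSplit hV1 hVsym hVmul hVU hex l 1 g _ _ hpos1 hpos2 hl hM
    rw [inv_one, one_mul] at hsplit
    obtain ⟨pq, ⟨p, hp, q, hq, hpq⟩, r, hr, hpqr⟩ := hsplit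
    have hpmem : p ∈ U * (rosWW U gseq M * U) ^ k :=
      ih p hp (le_trans le_self_add hM)
    have hrU : r ∈ U := mem_U_of_small hV1 hVsym hVmul hVU hr
    have hmem : p * (q * r) ∈ (U * (rosWW U gseq M * U) ^ k) * (rosWW U gseq M * U) :=
      Set.mul_mem_mul hpmem (Set.mul_mem_mul hq hrU)
    dsimp only at hpq hpqr
    have heq2 : g = p * (q * r) := by
      rw [← hpqr, ← hpq]; group
    rw [heq2, pow_succ, ← mul_assoc]
    exact hmem

include hV1 hVsym in
lemma cdistw_triangle (x y z : G) :
    cdist (rosW U V gseq) x z ≤ cdist (rosW U V gseq) x y + cdist (rosW U V gseq) y z :=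
  cdist_triangle _ (fun a => rosW_self hV1 hVsym a) (fun a b => rosW_comm hV1 hVsym a b) x y z

include hV1 hVsym in
lemma cdistw_comm (x y : G) : cdist (rosW U V gseq) x y = cdist (rosW U V gseq) y x :=
  cdist_comm _ (fun a => rosW_self hV1 hVsym a) (fun a b => rosW_comm hV1 hVsym a b) x y

include hV1 hVsym in
lemma cdistw_self (x : G) : cdist (rosW U V gseq) x x = 0 :=
  cdist_self _ (fun a => rosW_self hV1 hVsym a) x x

lemma mem_rosSS_of (hUsym : U⁻¹ = U) {f u : G} (hu : u ∈ U) {n : ℕ}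
    (hn : gseq n ∈ f • U) : f * u ∈ rosSS U gseq n := by
  obtain ⟨u₀, hu₀, hfu₀⟩ := hn
  refine Or.inl ?_
  rw [Set.mem_smul_set_iff_inv_smul_mem, smul_eq_mul]
  have hu₀inv : u₀⁻¹ ∈ U := by rw [← hUsym]; exact Set.inv_mem_inv.mpr hu₀
  have : (gseq n)⁻¹ * (f * u) = u₀⁻¹ * u := by
    rw [← hfu₀]; simp only [smul_eq_mul]; group
  rw [this]
  exact Set.mul_mem_mul hu₀inv hu

include hV1 hVsym in
lemma rosUpper (hUsym : U⁻¹ = U) (nf : G → ℕ) (hnf : ∀ f : G, gseq (nf f) ∈ f • U)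
    (F : Set G) (hF : F.Finite) :
    ∀ (k : ℕ) (a : G), a ∈ (F * U) ^ k →
      cdist (rosW U V gseq) 1 a ≤
        (k : ℝ≥0) * (((hF.toFinset.sup nf : ℕ) : ℝ≥0) + 1) := by
  intro k
  induction k with
  | zero =>
    intro a ha
    rw [pow_zero] at ha
    rw [Set.mem_one] at ha
    subst ha
    rw [cdistw_self hV1 hVsym]
    exact zero_le
  | succ k ih =>
    intro a ha
    rw [pow_succ] at ha
    obtain ⟨b, hb, c, hc, hbc⟩ := ha
    dsimp only at hbc
    obtain ⟨f, hf, u, hu, hfu⟩ := hc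
    dsimp only at hfu
    set N : ℕ := hF.toFinset.sup nf with hN
    have hjle : rosJmp U gseq 1 c ≤ N := by
      have hmem : (1:G)⁻¹ * c ∈ rosSS U gseq (nf f) := by
        rw [inv_one, one_mul, ← hfu]
        exact mem_rosSS_of hUsym hu (hnf f)
      refine le_trans (rosJmp_le hmem) ?_
      exact Finset.le_sup (hF.mem_toFinset.mpr hf)
    have hwc : rosW U V gseq 1 c ≤ (N : ℝ≥0) + 1 := by
      refine le_trans (rosW_le_jmp 1 c) ?_
      have : ((rosJmp U gseq 1 c : ℕ) : ℝ≥0) ≤ (N : ℝ≥0) := by exact_mod_cast hjle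
      exact add_le_add_left this 1
    have hstep : cdist (rosW U V gseq) b (b * c) ≤ (N : ℝ≥0) + 1 := by
      have hinv : cdist (rosW U V gseq) b (b * c) = cdist (rosW U V gseq) 1 c := by
        have := cdistw_invariant (U := U) (V := V) (gseq := gseq) b 1 c
        simpa using this
      rw [hinv]
      exact le_trans (cdist_le _ 1 c) hwc
    calc cdist (rosW U V gseq) 1 a = cdist (rosW U V gseq) 1 (b * c) := by rw [hbc]
      _ ≤ cdist (rosW U V gseq) 1 b + cdist (rosW U V gseq) b (b * c) :=
          cdistw_triangle hV1 hVsym 1 b (b * c)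
      _ ≤ (k : ℝ≥0) * ((N : ℝ≥0) + 1) + ((N : ℝ≥0) + 1) := add_le_add (by
            have := ih b hb
            push_cast at this ⊢
            exact this) hstep
      _ = ((k+1 : ℕ) : ℝ≥0) * ((N : ℝ≥0) + 1) := by push_cast; ring

end

section Topo
variable {G : Type*} [Group G] [TopologicalSpace G] [IsTopologicalGroup G]

lemma rosExistsCube {A : Set G} (hA : A ∈ 𝓝 (1:G)) :
    ∃ S : Set G, (IsOpen S ∧ (1:G) ∈ S ∧ S⁻¹ = S) ∧ S * S * S ⊆ A ∧ S ⊆ A := by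
  obtain ⟨V₁, hV₁o, hV₁1, hV₁m⟩ := exists_open_nhds_one_mul_subset hA
  obtain ⟨V₂, hV₂o, hV₂1, hV₂m⟩ := exists_open_nhds_one_mul_subset (hV₁o.mem_nhds hV₁1)
  have hV₂sub : V₂ ⊆ V₁ := (Set.subset_mul_left V₂ hV₂1).trans hV₂m
  have hV₁sub : V₁ ⊆ A := (Set.subset_mul_left V₁ hV₁1).trans hV₁m
  refine ⟨V₂ ∩ V₂⁻¹, ⟨hV₂o.inter hV₂o.inv, ⟨hV₂1, by simpa using hV₂1⟩, ?_⟩, ?_, ?_⟩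
  · rw [Set.inter_inv, inv_inv, Set.inter_comm]
  · have h1 : V₂ ∩ V₂⁻¹ ⊆ V₂ := Set.inter_subset_left
    calc (V₂ ∩ V₂⁻¹) * (V₂ ∩ V₂⁻¹) * (V₂ ∩ V₂⁻¹)
        ⊆ V₂ * V₂ * V₂ := Set.mul_subset_mul (Set.mul_subset_mul h1 h1) h1
      _ ⊆ V₁ * V₁ := Set.mul_subset_mul hV₂m hV₂sub
      _ ⊆ A := hV₁m
  · exact Set.inter_subset_left.trans (hV₂sub.trans hV₁sub)

lemma rosExistsV (U : Set G) (hU : U ∈ 𝓝 (1:G)) (b : ℕ → Set G) (hb : ∀ n, b n ∈ 𝓝 (1:G)) :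
    ∃ V : ℕ → Set G, (∀ n, IsOpen (V n)) ∧ (∀ n, (1:G) ∈ V n) ∧ (∀ n, (V n)⁻¹ = V n) ∧
      (∀ n, V (n+1) * V (n+1) * V (n+1) ⊆ V n) ∧ V 0 ⊆ U ∧ (∀ n, V n ⊆ b n) := by
  choose S hS1 hS2 hS3 using fun (A : Set G) (hA : A ∈ 𝓝 (1:G)) => rosExistsCube hA
  let T : ℕ → {s : Set G // IsOpen s ∧ (1:G) ∈ s} := fun n => Nat.rec
    ⟨S (U ∩ b 0) (Filter.inter_mem hU (hb 0)),
      (hS1 _ _).1, (hS1 _ _).2.1⟩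
    (fun n p => ⟨S (p.1 ∩ b (n+1)) (Filter.inter_mem (p.2.1.mem_nhds p.2.2) (hb (n+1))),
      (hS1 _ _).1, (hS1 _ _).2.1⟩) n
  refine ⟨fun n => (T n).1, fun n => (T n).2.1, fun n => (T n).2.2, fun n => ?_, fun n => ?_,
    ?_, fun n => ?_⟩
  · cases n with
    | zero => exact (hS1 _ _).2.2
    | succ n => exact (hS1 _ _).2.2
  · exact (hS2 _ _).trans Set.inter_subset_left
  · exact (hS3 _ _).trans Set.inter_subset_left
  · cases n with
    | zero => exact (hS3 _ _).trans Set.inter_subset_right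
    | succ n => exact (hS3 _ _).trans Set.inter_subset_right

end Topo

theorem exists_metric_finite_diam_iff_covered_by_FU_pow {G : Type*} [Group G]
    [TopologicalSpace G] [IsTopologicalGroup G] [TopologicalSpace.MetrizableSpace G]
    [TopologicalSpace.SeparableSpace G]
    (U : Set G) (hUopen : IsOpen U) (hU1 : (1 : G) ∈ U) (hUsym : U⁻¹ = U) :
    ∃ d : G → G → ℝ, IsCompatibleLeftInvariantMetric G d ∧
      ∀ A : Set G, FiniteDiam d A ↔
        ∃ F : Set G, F.Finite ∧ ∃ k : ℕ, 1 ≤ k ∧ A ⊆ (F * U) ^ k := by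
  classical
  have hne : Nonempty G := ⟨1⟩
  -- a countable antitone basis of neighbourhoods of 1
  obtain ⟨b, hbasis⟩ := (𝓝 (1:G)).exists_antitone_basis
  have hb : ∀ n, b n ∈ 𝓝 (1:G) := fun n => hbasis.toHasBasis.mem_of_mem trivial
  obtain ⟨V, hVo, hV1, hVsym, hVmul, hVU, hVb⟩ := rosExistsV U (hUopen.mem_nhds hU1) b hb
  -- the dense sequence
  set gseq : ℕ → G := TopologicalSpace.denseSeq G with hgseq
  have hdense : DenseRange gseq := TopologicalSpace.denseRange_denseSeq G
  have hgd : ∀ f : G, ∃ n, gseq n ∈ f • U := by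
    intro f
    have hopen : IsOpen (f • U) := hUopen.smul f
    have hne' : (f • U).Nonempty := ⟨f • (1:G), Set.smul_mem_smul_set hU1⟩
    exact hdense.exists_mem_open hopen hne'
  choose nf hnf using hgd
  have hex : ∀ a c : G, ∃ n, a⁻¹ * c ∈ rosSS U gseq n := by
    intro a c
    refine ⟨nf (a⁻¹ * c), ?_⟩
    have h1 : (a⁻¹ * c) * 1 ∈ rosSS U gseq (nf (a⁻¹ * c)) :=
      mem_rosSS_of hUsym hU1 (hnf _)
    simpa using h1
  set w : G → G → ℝ≥0 := rosW U V gseq with hw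
  set dnn : G → G → ℝ≥0 := cdist w with hdnn
  -- small-scale comparison
  have key1 : ∀ (x y : G) (c : ℝ≥0), c ≤ 1 → dnn x y < c → cdist (rosD0 V) x y < c := by
    intro x y c hc1 hlt
    obtain ⟨l, hl⟩ := exists_chain_of_cdist_lt hlt
    have hl1 : chainSum w x l y < 1 := lt_of_lt_of_le hl hc1
    exact lt_of_le_of_lt (cdistr_le_chainSum_rosW hV1 hVsym hVmul l x y hl1) hl
  have key2 : ∀ x y : G, cdist (rosD0 V) x y < 8⁻¹ → dnn x y ≤ cdist (rosD0 V) x y :=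
    fun x y h => le_trans (cdist_le w x y) (rosW_le_cdistr h)
  have pow_le_one' : ∀ j : ℕ, ((2:ℝ≥0)⁻¹) ^ j ≤ 1 :=
    fun j => pow_le_one₀ (zero_le) half_lt_one.le
  have pow_succ_le : ∀ j m : ℕ, m ≤ j → ((2:ℝ≥0)⁻¹) ^ j ≤ 2⁻¹ ^ m :=
    fun j m h => pow_le_pow_of_le_one (zero_le) half_lt_one.le h
  -- separation
  have hsep : ∀ x y : G, dnn x y = 0 → x = y := by
    intro x y h0
    have hmem : ∀ j, x⁻¹ * y ∈ V j := by
      intro j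
      have hlt : dnn x y < 2⁻¹ ^ (j+3) := by
        rw [h0]; positivity
      have h1 : cdist (rosD0 V) x y < 2⁻¹ ^ (j+3) := key1 x y _ (pow_le_one' _) hlt
      exact mem_V_of_cdistr_le hV1 hVsym hVmul
        (le_trans h1.le (pow_succ_le _ _ (by omega)))
    have hmem' : ∀ s ∈ 𝓝 (1:G), x⁻¹ * y ∈ s := by
      intro s hs
      obtain ⟨n, -, hn⟩ := hbasis.toHasBasis.mem_iff.mp hs
      exact hn (hVb n (hmem n))
    have heq1 : x⁻¹ * y = 1 := by
      by_contra hne1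
      obtain ⟨s, hso, hs1, hsny⟩ := (t1Space_iff_exists_open.mp inferInstance) (Ne.symm hne1)
      exact hsny (hmem' s (hso.mem_nhds hs1))
    exact inv_mul_eq_one.mp heq1
  refine ⟨fun x y => (dnn x y : ℝ), ⟨⟨?_, ?_, ?_⟩, ?_, ?_⟩, ?_⟩
  · -- eq-zero iff
    intro x y
    dsimp only
    constructor
    · intro h
      exact hsep x y (by exact_mod_cast h)
    · rintro rfl
      have : dnn x x = 0 := cdistw_self hV1 hVsym x
      exact_mod_cast this
  · -- symmetry
    intro x y
    dsimp only
    rw [hdnn, hw]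
    exact_mod_cast cdistw_comm hV1 hVsym x y
  · -- triangle
    intro x y z
    dsimp only
    have := cdistw_triangle (U := U) (V := V) (gseq := gseq) hV1 hVsym x y z
    exact_mod_cast this
  · -- compatibility
    intro x s
    dsimp only
    constructor
    · intro hs
      have hcont : ContinuousAt (fun y : G => x * y) 1 := (continuous_mul_left x).continuousAt
      have hxs : s ∈ 𝓝 ((fun y : G => x * y) 1) := by simpa using hs
      have ht : (fun y : G => x * y) ⁻¹' s ∈ 𝓝 (1:G) := hcont.preimage_mem_nhds hxs
      obtain ⟨n, -, hn⟩ := hbasis.toHasBasis.mem_iff.mp ht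
      refine ⟨((2⁻¹ : ℝ≥0) ^ (n+3) : ℝ≥0), by positivity, ?_⟩
      intro y hy
      simp only [Set.mem_setOf_eq] at hy
      have hy' : dnn x y < 2⁻¹ ^ (n+3) := by exact_mod_cast hy
      have h1 : cdist (rosD0 V) x y < 2⁻¹ ^ (n+3) := key1 x y _ (pow_le_one' _) hy'
      have h2 : x⁻¹ * y ∈ V n := mem_V_of_cdistr_le hV1 hVsym hVmul
        (le_trans h1.le (pow_succ_le _ _ (by omega)))
      have h3 : x⁻¹ * y ∈ (fun y : G => x * y) ⁻¹' s := hn (hVb n h2)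
      simpa using h3
    · rintro ⟨ε, hε, hsub⟩
      obtain ⟨m, hm⟩ := exists_pow_lt_of_lt_one (lt_min hε (by norm_num : (0:ℝ) < 8⁻¹))
        (by norm_num : (2⁻¹ : ℝ) < 1)
      have hball : x • V m ⊆ {y : G | (dnn x y : ℝ) < ε} := by
        intro y hy
        rw [Set.mem_smul_set_iff_inv_smul_mem, smul_eq_mul] at hy
        have h1 : cdist (rosD0 V) x y ≤ 2⁻¹ ^ (m+1) := cdistr_le_of_mem_V hV1 hVmul hy
        have hcoe : ((2⁻¹ : ℝ≥0) ^ (m+1) : ℝ) = (2⁻¹:ℝ) ^ (m+1) := by push_cast; ring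
        have hmR : ((2⁻¹:ℝ≥0) ^ (m+1) : ℝ) < min ε 8⁻¹ := by
          rw [hcoe]
          calc (2⁻¹:ℝ) ^ (m+1) ≤ (2⁻¹:ℝ) ^ m :=
                pow_le_pow_of_le_one (by norm_num) (by norm_num) (by omega)
            _ < min ε 8⁻¹ := hm
        have h8 : cdist (rosD0 V) x y < 8⁻¹ := by
          have : ((2⁻¹:ℝ≥0) ^ (m+1) : ℝ) < ((8⁻¹ : ℝ≥0) : ℝ) := by
            refine lt_of_lt_of_le hmR (le_trans (min_le_right _ _) (le_of_eq ?_))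
            push_cast; norm_num
          have hlt : (2⁻¹:ℝ≥0) ^ (m+1) < (8⁻¹ : ℝ≥0) := by exact_mod_cast this
          exact lt_of_le_of_lt h1 hlt
        have h2 : dnn x y ≤ 2⁻¹ ^ (m+1) := le_trans (key2 x y h8) h1
        have : (dnn x y : ℝ) ≤ ((2⁻¹:ℝ≥0) ^ (m+1) : ℝ) := by exact_mod_cast h2
        simp only [Set.mem_setOf_eq]
        exact lt_of_le_of_lt this (lt_of_lt_of_le hmR (min_le_left _ _))
      have hmem : x • V m ∈ 𝓝 x := by
        refine ((hVo m).smul x).mem_nhds ?_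
        exact ⟨1, hV1 m, by simp⟩
      exact mem_of_superset hmem (hball.trans hsub)
  · -- left invariance
    intro h g f
    dsimp only
    rw [hdnn, hw]
    exact_mod_cast cdistw_invariant (U := U) (V := V) (gseq := gseq) h g f
  · -- the main characterisation
    intro A
    constructor
    · -- finite diameter → covered by (FU)^k
      rintro ⟨C, hC⟩
      rcases Set.eq_empty_or_nonempty A with rfl | ⟨a₀, ha₀⟩
      · exact ⟨{1}, Set.finite_singleton 1, 1, le_rfl, by simp⟩
      have hC0 : 0 ≤ C := le_trans (by positivity) (hC a₀ ha₀ a₀ ha₀)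
      set k : ℕ := ⌈C * 8⌉₊ + 1 with hk
      set M : ℝ≥0 := 8⁻¹ + (k : ℝ≥0) * 8⁻¹ with hM
      have hMcoe : ((M : ℝ≥0) : ℝ) = ((k:ℝ) + 1) / 8 := by
        rw [hM]; push_cast; ring
      have hball : ∀ a ∈ A, dnn 1 (a₀⁻¹ * a) < M := by
        intro a ha
        have h1 : (dnn a₀ a : ℝ) ≤ C := hC a₀ ha₀ a ha
        have h2 : C < ((M : ℝ≥0) : ℝ) := by
          rw [hMcoe]
          have h8C : C * 8 < (k:ℝ) + 1 := by
            calc C * 8 ≤ (⌈C * 8⌉₊ : ℝ) := Nat.le_ceil _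
              _ < (k:ℝ) + 1 := by rw [hk]; push_cast; linarith
          linarith
        have h3 : dnn a₀ a < M := by
          rw [← NNReal.coe_lt_coe]
          exact lt_of_le_of_lt h1 h2
        rw [hdnn, hw] at h3 ⊢
        rwa [← cdistw_eq_one]
      have hiter : ∀ a ∈ A, a₀⁻¹ * a ∈ U * (rosWW U gseq M * U) ^ k := by
        intro a ha
        have := hball a ha
        rw [hdnn, hw] at this
        exact rosIter hV1 hVsym hVmul hVU hex k (a₀⁻¹ * a) (by rw [hM] at this; exact this)
          le_rfl
      -- the finite set F
      set F : Set G := ({1, a₀} : Set G) ∪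
        ⋃ n ∈ Finset.range (k+1), ({gseq n, (gseq n)⁻¹} : Set G) with hF
      have hFfin : F.Finite := by
        refine ((Set.finite_singleton a₀).insert 1).union ?_
        exact Set.Finite.biUnion (Finset.range (k+1)).finite_toSet
          (fun n _ => (Set.finite_singleton (gseq n)⁻¹).insert _)
      have h1F : (1:G) ∈ F := Set.mem_union_left _ (Set.mem_insert _ _)
      have ha₀F : a₀ ∈ F := Set.mem_union_left _ (Set.mem_insert_of_mem _ rfl)
      have hgF : ∀ n, n ≤ k → gseq n ∈ F ∧ (gseq n)⁻¹ ∈ F := by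
        intro n hn
        have hmem : n ∈ Finset.range (k+1) := Finset.mem_range.mpr (by omega)
        constructor
        · exact Set.mem_union_right _ (Set.mem_biUnion hmem (Set.mem_insert _ _))
        · exact Set.mem_union_right _ (Set.mem_biUnion hmem (Set.mem_insert_of_mem _ rfl))
      have hFU1 : (1:G) ∈ F * U := ⟨1, h1F, 1, hU1, mul_one 1⟩
      have hUsub : U ⊆ F * U := fun u hu => ⟨1, h1F, u, hu, one_mul u⟩
      have hnk : ∀ n : ℕ, ((n:ℝ≥0) + 1 ≤ M) → n ≤ k := by
        intro n hn
        have h1 : ((n:ℝ) + 1) ≤ ((M : ℝ≥0) : ℝ) := by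
          have := NNReal.coe_le_coe.mpr hn
          push_cast at this
          convert this using 1
        rw [hMcoe] at h1
        have h2 : ((k:ℝ) + 1) / 8 ≤ (k:ℝ) + 1 := by
          have : (0:ℝ) ≤ (k:ℝ) + 1 := by positivity
          linarith
        have : (n:ℝ) ≤ (k:ℝ) := by linarith
        exact_mod_cast this
      have hWsub : rosWW U gseq M ⊆ (F * U) ^ 3 := by
        have hpad : F * U ⊆ (F * U) ^ 3 := by
          have := Set.pow_subset_pow_right hFU1 (show 1 ≤ 3 by norm_num)
          rwa [pow_one] at this
        intro g hg
        rcases hg with hgU | hgS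
        · exact hpad (hUsub hgU)
        · obtain ⟨n, hn, hmem⟩ := Set.mem_iUnion₂.mp hgS
          have hnle : n ≤ k := hnk n hn
          have hgseqF := hgF n hnle
          rcases hmem with hg1 | hg2
          · -- g ∈ gseq n • (U * U)
            obtain ⟨uu, huu, hguu⟩ := hg1
            obtain ⟨u1, hu1, u2, hu2, huu12⟩ := huu
            have mem1 : gseq n * u1 ∈ F * U := ⟨gseq n, hgseqF.1, u1, hu1, rfl⟩
            have mem2 : (1:G) * u2 ∈ F * U := ⟨1, h1F, u2, hu2, rfl⟩
            have mem3 : (1:G) * (1:G) ∈ F * U := ⟨1, h1F, 1, hU1, rfl⟩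
            have hprod : ((gseq n * u1) * ((1:G) * u2)) * ((1:G) * (1:G)) ∈
                ((F * U) * (F * U)) * (F * U) :=
              Set.mul_mem_mul (Set.mul_mem_mul mem1 mem2) mem3
            have heqg : g = ((gseq n * u1) * ((1:G) * u2)) * ((1:G) * (1:G)) := by
              dsimp only at huu12 hguu
              rw [← hguu, ← huu12, smul_eq_mul]; group
            rw [show ((F*U) * (F*U)) * (F*U) = (F*U)^3 by
              rw [pow_succ, pow_succ, pow_one]] at hprod
            rw [heqg]
            exact hprod
          · -- g ∈ (gseq n • (U * U))⁻¹
            rw [Set.mem_inv] at hg2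
            obtain ⟨uu, huu, hguu⟩ := hg2
            obtain ⟨u1, hu1, u2, hu2, huu12⟩ := huu
            have hu1' : u1⁻¹ ∈ U := by rw [← hUsym]; exact Set.inv_mem_inv.mpr hu1
            have hu2' : u2⁻¹ ∈ U := by rw [← hUsym]; exact Set.inv_mem_inv.mpr hu2
            have mem1 : (1:G) * u2⁻¹ ∈ F * U := ⟨1, h1F, u2⁻¹, hu2', rfl⟩
            have mem2 : (1:G) * u1⁻¹ ∈ F * U := ⟨1, h1F, u1⁻¹, hu1', rfl⟩
            have mem3 : (gseq n)⁻¹ * (1:G) ∈ F * U := ⟨(gseq n)⁻¹, hgseqF.2, 1, hU1, rfl⟩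
            have hprod : (((1:G) * u2⁻¹) * ((1:G) * u1⁻¹)) * ((gseq n)⁻¹ * (1:G)) ∈
                ((F * U) * (F * U)) * (F * U) :=
              Set.mul_mem_mul (Set.mul_mem_mul mem1 mem2) mem3
            have heqg : g = (((1:G) * u2⁻¹) * ((1:G) * u1⁻¹)) * ((gseq n)⁻¹ * (1:G)) := by
              dsimp only at huu12 hguu
              have : g⁻¹ = gseq n * (u1 * u2) := by rw [← hguu, ← huu12, smul_eq_mul]
              have hg' : g = (u1 * u2)⁻¹ * (gseq n)⁻¹ := by
                rw [← mul_inv_rev, ← this, inv_inv]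
              rw [hg']; group
            rw [show ((F*U) * (F*U)) * (F*U) = (F*U)^3 by
              rw [pow_succ, pow_succ, pow_one]] at hprod
            rw [heqg]
            exact hprod
      have hU1sub : U ⊆ (F * U) ^ 1 := by rw [pow_one]; exact hUsub
      have hWU4 : rosWW U gseq M * U ⊆ (F * U) ^ 4 := by
        refine (Set.mul_subset_mul hWsub hU1sub).trans (subset_of_eq ?_)
        rw [← pow_add]
      refine ⟨F, hFfin, 1 + 4 * k, by omega, ?_⟩
      intro a ha
      have hz := hiter a ha
      have haeq : a = a₀ * (a₀⁻¹ * a) := by group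
      have hmem : a₀ * (a₀⁻¹ * a) ∈ ({a₀} : Set G) * (U * (rosWW U gseq M * U) ^ k) :=
        Set.mul_mem_mul rfl hz
      rw [← haeq] at hmem
      have hsub2 : ({a₀} : Set G) * (U * (rosWW U gseq M * U) ^ k) ⊆ (F * U) ^ (1 + 4 * k) := by
        rw [← mul_assoc]
        have hs1 : ({a₀} : Set G) * U ⊆ (F * U) ^ 1 := by
          rw [pow_one]
          exact Set.mul_subset_mul_right (Set.singleton_subset_iff.mpr ha₀F)
        have hs2 : (rosWW U gseq M * U) ^ k ⊆ (F * U) ^ (4 * k) := by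
          refine (Set.pow_subset_pow_left hWU4).trans (subset_of_eq ?_)
          rw [pow_mul]
        refine (Set.mul_subset_mul hs1 hs2).trans (subset_of_eq ?_)
        rw [← pow_add]
      exact hsub2 hmem
    · -- covered → finite diameter
      rintro ⟨F, hF, k, hk1, hsub⟩
      set N : ℕ := hF.toFinset.sup nf with hN
      refine ⟨2 * ((k:ℝ) * ((N:ℝ) + 1)), ?_⟩
      intro x hx y hy
      have hxb : cdist w 1 x ≤ (k : ℝ≥0) * ((N:ℝ≥0) + 1) := by
        have := rosUpper hV1 hVsym hUsym nf hnf F hF k x (hsub hx)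
        rw [hw]
        exact_mod_cast this
      have hyb : cdist w 1 y ≤ (k : ℝ≥0) * ((N:ℝ≥0) + 1) := by
        have := rosUpper hV1 hVsym hUsym nf hnf F hF k y (hsub hy)
        rw [hw]
        exact_mod_cast this
      have htri : dnn x y ≤ cdist w 1 x + cdist w 1 y := by
        rw [hdnn]
        calc cdist w x y ≤ cdist w x 1 + cdist w 1 y := by
              rw [hw]; exact cdistw_triangle hV1 hVsym x 1 y
          _ = cdist w 1 x + cdist w 1 y := by
              rw [hw, cdistw_comm hV1 hVsym x 1]
      have : dnn x y ≤ (k : ℝ≥0) * ((N:ℝ≥0) + 1) + (k : ℝ≥0) * ((N:ℝ≥0) + 1) :=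
        le_trans htri (add_le_add hxb hyb)
      have hreal : (dnn x y : ℝ) ≤ ((k : ℝ≥0) * ((N:ℝ≥0) + 1) + (k : ℝ≥0) * ((N:ℝ≥0) + 1) : ℝ≥0) := by
        exact_mod_cast this
      refine le_trans hreal (le_of_eq ?_)
      push_cast
      ring
end

section
/- Let G be a separable metrisable topological group and A ⊆ G. Then A has property (OB) relative to G if and only if for every open neighbourhood V of the identity there are a finite subset F ⊆ G and some k ≥ 1 so that A ⊆ (FV)^k. -/
open Filter Topology
open scoped Pointwise

set_option linter.unusedSectionVars false

namespace RelOB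
section Plain
variable {G : Type*} [Group G]


/-- The set of candidate values for the prenorm. -/
def rhoSet (U : ℕ → Set G) (u : G) : Set ℝ :=
  {c | c = 1 ∨ ∃ n, u ∈ U n ∧ c = (1/2 : ℝ) ^ (n + 1)}

noncomputable def rho (U : ℕ → Set G) (u : G) : ℝ := sInf (rhoSet U u)

lemma rhoSet_nonempty (U : ℕ → Set G) (u : G) : (rhoSet U u).Nonempty := ⟨1, Or.inl rfl⟩

lemma rhoSet_bddBelow (U : ℕ → Set G) (u : G) : BddBelow (rhoSet U u) := by
  refine ⟨0, fun c hc => ?_⟩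
  rcases hc with rfl | ⟨n, _, rfl⟩
  · norm_num
  · positivity

lemma rho_nonneg (U : ℕ → Set G) (u : G) : 0 ≤ rho U u :=
  le_csInf (rhoSet_nonempty U u) (fun c hc => by
    rcases hc with rfl | ⟨n, _, rfl⟩
    · norm_num
    · positivity)

lemma rho_le_one (U : ℕ → Set G) (u : G) : rho U u ≤ 1 :=
  csInf_le (rhoSet_bddBelow U u) (Or.inl rfl)

lemma rho_le_of_mem {U : ℕ → Set G} {u : G} {n : ℕ} (h : u ∈ U n) :
    rho U u ≤ (1/2 : ℝ) ^ (n + 1) :=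
  csInf_le (rhoSet_bddBelow U u) (Or.inr ⟨n, h, rfl⟩)

lemma mem_of_rho_lt {U : ℕ → Set G} (hmono : ∀ n, U (n+1) ⊆ U n) {u : G} {n : ℕ}
    (h : rho U u < (1/2 : ℝ) ^ n) : u ∈ U n := by
  have hUmono : ∀ m n : ℕ, m ≤ n → U n ⊆ U m := by
    intro m n hmn
    induction hmn with
    | refl => exact subset_rfl
    | step _ ih => exact (hmono _).trans ih
  obtain ⟨c, hc, hlt⟩ := (csInf_lt_iff (rhoSet_bddBelow U u) (rhoSet_nonempty U u)).1 h
  rcases hc with rfl | ⟨m, hm, rfl⟩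
  · exact absurd (lt_of_lt_of_le hlt (pow_le_one₀ (by norm_num) (by norm_num))) (lt_irrefl 1)
  · have : n < m + 1 := by
      have := (pow_lt_pow_iff_right_of_lt_one₀ (by norm_num : (0:ℝ) < 1/2)
        (by norm_num : (1/2:ℝ) < 1)).1 hlt
      exact this
    exact hUmono n m (Nat.lt_succ_iff.1 this) hm

lemma rho_one_eq_zero {U : ℕ → Set G} (hone : ∀ n, (1:G) ∈ U n) : rho U 1 = 0 := by
  refine le_antisymm ?_ (rho_nonneg U 1)
  by_contra hpos
  push_neg at hpos
  obtain ⟨n, hn⟩ := exists_pow_lt_of_lt_one hpos (by norm_num : (1/2:ℝ) < 1)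
  have h1 : rho U 1 ≤ (1/2 : ℝ) ^ (n+1) := rho_le_of_mem (hone n)
  have h2 : ((1:ℝ)/2) ^ (n+1) ≤ (1/2:ℝ)^n :=
    pow_le_pow_of_le_one (by norm_num) (by norm_num) (Nat.le_succ n)
  linarith

lemma rho_inv {U : ℕ → Set G} (hsymm : ∀ n, (U n)⁻¹ = U n) (u : G) :
    rho U u⁻¹ = rho U u := by
  have hmem : ∀ (v : G) (n : ℕ), v ∈ U n ↔ v⁻¹ ∈ U n := by
    intro v n
    constructor
    · intro h; rw [← hsymm n]; exact Set.inv_mem_inv.2 h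
    · intro h; rw [← hsymm n] at h; simpa using h
  unfold rho rhoSet
  congr 1
  ext c
  simp only [Set.mem_setOf_eq]
  constructor
  · rintro (rfl | ⟨n, hn, rfl⟩)
    · exact Or.inl rfl
    · exact Or.inr ⟨n, (hmem u n).mpr hn, rfl⟩
  · rintro (rfl | ⟨n, hn, rfl⟩)
    · exact Or.inl rfl
    · exact Or.inr ⟨n, (hmem u n).mp hn, rfl⟩

lemma eq_one_of_rho_eq_zero {U : ℕ → Set G} (hmono : ∀ n, U (n+1) ⊆ U n)
    (hsep : ∀ u : G, (∀ n, u ∈ U n) → u = 1) {u : G} (h : rho U u ≤ 0) : u = 1 := by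
  refine hsep u fun n => mem_of_rho_lt hmono (lt_of_le_of_lt h (by positivity))

lemma rho_prod_le {U : ℕ → Set G} (hmono : ∀ n, U (n+1) ⊆ U n)
    (hsep : ∀ u : G, (∀ n, u ∈ U n) → u = 1) (hone : ∀ n, (1:G) ∈ U n)
    (hcube : ∀ n, U (n+1) * U (n+1) * U (n+1) ⊆ U n) :
    ∀ (N : ℕ) (l : List (G × ℝ)), l.length ≤ N →
      (∀ p ∈ l, 0 ≤ p.2 ∧ rho U p.1 ≤ p.2) →
      rho U (l.map Prod.fst).prod ≤ 2 * (l.map Prod.snd).sum := by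
  classical
  intro N
  induction N with
  | zero =>
      intro l hl _
      rw [List.length_eq_zero_iff.1 (Nat.le_zero.1 hl)]
      simp [rho_one_eq_zero hone]
  | succ N ih =>
      intro l hl hlet
      set s : ℝ := (l.map Prod.snd).sum with hs
      have hs0 : 0 ≤ s := List.sum_nonneg (by
        intro c hc
        obtain ⟨p, hp, rfl⟩ := List.mem_map.1 hc
        exact (hlet p hp).1)
      by_cases hbig : 1 ≤ 2 * s
      · exact (rho_le_one U _).trans hbig
      push_neg at hbig
      rcases eq_or_lt_of_le hs0 with hzero | hpos
      · -- all costs zero, all letters are 1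
        have : ∀ p ∈ l, p.1 = 1 := by
          intro p hp
          have h1 : p.2 ≤ s := List.single_le_sum (by
            intro c hc
            obtain ⟨q, hq, rfl⟩ := List.mem_map.1 hc
            exact (hlet q hq).1) _ (List.mem_map_of_mem (f := Prod.snd) hp)
          exact eq_one_of_rho_eq_zero hmono hsep
            ((hlet p hp).2.trans (h1.trans (le_of_eq hzero.symm)))
        have hprod : (l.map Prod.fst).prod = 1 := List.prod_eq_one (by
          intro x hx
          obtain ⟨p, hp, rfl⟩ := List.mem_map.1 hx
          exact this p hp)
        rw [hprod, rho_one_eq_zero hone]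
        linarith
      · -- 0 < s, split the list
        set len := l.length with hlen
        have hlenpos : 0 < len := by
          rcases Nat.eq_zero_or_pos len with h0 | h
          · exfalso
            rw [List.length_eq_zero_iff.1 h0] at hs
            simp at hs
            rw [hs] at hpos; exact lt_irrefl _ hpos
          · exact h
        set P : ℕ → Prop := fun j => ((l.take j).map Prod.snd).sum ≤ s / 2 with hP
        have hP0 : P 0 := by simp [hP]; linarith
        set j := Nat.findGreatest P len with hj
        have hPj : P j := Nat.findGreatest_spec (Nat.zero_le len) hP0
        have hjle : j ≤ len := Nat.findGreatest_le len
        have hjlt : j < len := by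
          rcases eq_or_lt_of_le hjle with heq | h
          · exfalso
            have : P len := heq ▸ hPj
            rw [hP] at this
            rw [hlen] at this
            simp only [List.take_length] at this
            rw [← hs] at this
            linarith
          · exact h
        have hnotPj1 : ¬ P (j + 1) :=
          Nat.findGreatest_is_greatest (Nat.lt_succ_self j) hjlt
        -- decompose l
        have hdecomp : l = l.take j ++ l[j] :: l.drop (j+1) := by
          conv_lhs => rw [← List.take_append_drop j l]
          rw [List.drop_eq_getElem_cons hjlt]
        set x := l[j] with hx
        set l₁ := l.take j with hl₁
        set l₂ := l.drop (j+1) with hl₂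
        set s₁ := (l₁.map Prod.snd).sum with hs₁
        set s₂ := (l₂.map Prod.snd).sum with hs₂
        have hsum : s = s₁ + (x.2 + s₂) := by
          rw [hs]
          conv_lhs => rw [hdecomp]
          simp [hs₁, hs₂]
        have htake1 : l.take (j+1) = l₁ ++ [x] := by
          rw [List.take_succ, hl₁, hx]
          congr 1
          rw [List.getElem?_eq_getElem hjlt]
          rfl
        have hs1c : s / 2 < s₁ + x.2 := by
          have := hnotPj1
          rw [hP] at this
          push_neg at this
          rw [htake1] at this
          simpa [hs₁] using this
        have hs1 : s₁ ≤ s / 2 := by rw [hP] at hPj; exact hPj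
        have hs2 : s₂ ≤ s / 2 := by linarith
        have hmem₁ : ∀ p ∈ l₁, 0 ≤ p.2 ∧ rho U p.1 ≤ p.2 := fun p hp =>
          hlet p (List.mem_of_mem_take hp)
        have hmem₂ : ∀ p ∈ l₂, 0 ≤ p.2 ∧ rho U p.1 ≤ p.2 := fun p hp =>
          hlet p (List.mem_of_mem_drop hp)
        have hmemx : x ∈ l := List.getElem_mem hjlt
        have hs₁0 : 0 ≤ s₁ := List.sum_nonneg (by
          intro c hc; obtain ⟨q, hq, rfl⟩ := List.mem_map.1 hc; exact (hmem₁ q hq).1)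
        have hs₂0 : 0 ≤ s₂ := List.sum_nonneg (by
          intro c hc; obtain ⟨q, hq, rfl⟩ := List.mem_map.1 hc; exact (hmem₂ q hq).1)
        have hlen₁ : l₁.length ≤ N := by
          have : l₁.length = j := by
            rw [hl₁, List.length_take]
            exact min_eq_left hjle
          omega
        have hlen₂ : l₂.length ≤ N := by
          rw [hl₂, List.length_drop]
          omega
        have h₁ := ih l₁ hlen₁ hmem₁
        have h₂ := ih l₂ hlen₂ hmem₂
        have hrx : rho U x.1 ≤ s := by
          have := (hlet x hmemx).2
          have hx2 : x.2 ≤ s := by linarith [ (hlet x hmemx).1 ]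
          linarith
        have hr₁ : rho U (l₁.map Prod.fst).prod ≤ s := by
          rw [← hs₁] at h₁; linarith
        have hr₂ : rho U (l₂.map Prod.fst).prod ≤ s := by
          rw [← hs₂] at h₂; linarith
        -- choose the scale n
        have hex : ∃ n : ℕ, (1/2:ℝ)^n ≤ 2 * s := by
          obtain ⟨n, hn⟩ := exists_pow_lt_of_lt_one (by linarith : (0:ℝ) < 2*s)
            (by norm_num : (1/2:ℝ) < 1)
          exact ⟨n, hn.le⟩
        set n₀ := Nat.find hex with hn₀
        have hn₀spec : (1/2:ℝ)^n₀ ≤ 2*s := Nat.find_spec hex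
        have hn₀pos : 0 < n₀ := by
          rcases Nat.eq_zero_or_pos n₀ with h0 | h
          · exfalso; rw [h0] at hn₀spec; simp at hn₀spec; linarith
          · exact h
        set n := n₀ - 1 with hn
        have hlt : 2 * s < (1/2:ℝ)^n := by
          have := Nat.find_min hex (show n < n₀ by omega)
          push_neg at this
          exact this
        have hsucc : n + 1 = n₀ := by omega
        have hslt : s < (1/2:ℝ)^(n+1) := by
          rw [pow_succ]
          linarith
        have hm₁ : (l₁.map Prod.fst).prod ∈ U (n+1) :=
          mem_of_rho_lt hmono (lt_of_le_of_lt hr₁ hslt)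
        have hm₂ : (l₂.map Prod.fst).prod ∈ U (n+1) :=
          mem_of_rho_lt hmono (lt_of_le_of_lt hr₂ hslt)
        have hmx : x.1 ∈ U (n+1) :=
          mem_of_rho_lt hmono (lt_of_le_of_lt hrx hslt)
        have hprodmem : (l.map Prod.fst).prod ∈ U n := by
          have heq : (l.map Prod.fst).prod =
              (l₁.map Prod.fst).prod * x.1 * (l₂.map Prod.fst).prod := by
            conv_lhs => rw [hdecomp]
            simp [mul_assoc]
          rw [heq]
          exact hcube n (Set.mul_mem_mul (Set.mul_mem_mul hm₁ hmx) hm₂)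
        calc rho U (l.map Prod.fst).prod ≤ (1/2:ℝ)^(n+1) := rho_le_of_mem hprodmem
          _ = (1/2:ℝ)^n₀ := by rw [hsucc]
          _ ≤ 2 * s := hn₀spec
variable {S : Set (G × ℝ)}


/-- Admissible cost values for writing `u` as a product of letters from `S`. -/
def costs (S : Set (G × ℝ)) (u : G) : Set ℝ :=
  {c | ∃ l : List (G × ℝ), (∀ p ∈ l, p ∈ S) ∧ (l.map Prod.fst).prod = u ∧
    (l.map Prod.snd).sum = c}

noncomputable def ell (S : Set (G × ℝ)) (u : G) : ℝ := sInf (costs S u)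


lemma costs_nonempty (hcover : ∀ u : G, ∃ c : ℝ, (u, c) ∈ S) (u : G) :
    (costs S u).Nonempty := by
  obtain ⟨c, hc⟩ := hcover u
  exact ⟨c, [(u, c)], by simpa using hc, by simp, by simp⟩

lemma costs_bddBelow (hnn : ∀ p ∈ S, 0 ≤ p.2) (u : G) : BddBelow (costs S u) := by
  refine ⟨0, fun c hc => ?_⟩
  obtain ⟨l, hl, -, rfl⟩ := hc
  exact List.sum_nonneg (by
    intro b hb
    obtain ⟨p, hp, rfl⟩ := List.mem_map.1 hb
    exact hnn p (hl p hp))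

lemma ell_nonneg (hnn : ∀ p ∈ S, 0 ≤ p.2) (hcover : ∀ u : G, ∃ c : ℝ, (u, c) ∈ S)
    (u : G) : 0 ≤ ell S u :=
  le_csInf (costs_nonempty hcover u) fun c hc => by
    obtain ⟨l, hl, -, rfl⟩ := hc
    exact List.sum_nonneg (by
      intro b hb
      obtain ⟨p, hp, rfl⟩ := List.mem_map.1 hb
      exact hnn p (hl p hp))

lemma ell_one_eq_zero (hnn : ∀ p ∈ S, 0 ≤ p.2) (hcover : ∀ u : G, ∃ c : ℝ, (u, c) ∈ S) :
    ell S (1 : G) = 0 := by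
  refine le_antisymm ?_ (ell_nonneg hnn hcover 1)
  exact csInf_le (costs_bddBelow hnn 1) ⟨[], by simp, by simp, by simp⟩

lemma ell_le_of_mem (hnn : ∀ p ∈ S, 0 ≤ p.2) {u : G} {c : ℝ} (h : (u, c) ∈ S) :
    ell S u ≤ c :=
  csInf_le (costs_bddBelow hnn u) ⟨[(u, c)], by simpa using h, by simp, by simp⟩

lemma ell_mul_le (hnn : ∀ p ∈ S, 0 ≤ p.2) (hcover : ∀ u : G, ∃ c : ℝ, (u, c) ∈ S)
    (u v : G) : ell S (u * v) ≤ ell S u + ell S v := by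
  refine le_of_forall_pos_le_add fun ε hε => ?_
  obtain ⟨a, ha, halt⟩ := (csInf_lt_iff (costs_bddBelow hnn u) (costs_nonempty hcover u)).1
    (lt_add_of_pos_right _ (by linarith : (0:ℝ) < ε/2))
  obtain ⟨b, hb, hblt⟩ := (csInf_lt_iff (costs_bddBelow hnn v) (costs_nonempty hcover v)).1
    (lt_add_of_pos_right _ (by linarith : (0:ℝ) < ε/2))
  obtain ⟨la, hla, hpa, hsa⟩ := ha
  obtain ⟨lb, hlb, hpb, hsb⟩ := hb
  have : a + b ∈ costs S (u * v) := by
    refine ⟨la ++ lb, ?_, ?_, ?_⟩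
    · intro p hp; rcases List.mem_append.1 hp with h | h
      · exact hla p h
      · exact hlb p h
    · rw [List.map_append, List.prod_append, hpa, hpb]
    · rw [List.map_append, List.sum_append, hsa, hsb]
  calc ell S (u * v) ≤ a + b := csInf_le (costs_bddBelow hnn _) this
    _ ≤ ell S u + ell S v + ε := by unfold ell; linarith

lemma costs_inv_subset (hinv : ∀ p ∈ S, (p.1⁻¹, p.2) ∈ S) (u : G) :
    costs S u ⊆ costs S u⁻¹ := by
  rintro c ⟨l, hl, hp, hs⟩
  refine ⟨(l.reverse).map fun p => (p.1⁻¹, p.2), ?_, ?_, ?_⟩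
  · intro p hp
    obtain ⟨q, hq, rfl⟩ := List.mem_map.1 hp
    exact hinv q (hl q (List.mem_reverse.1 hq))
  · have h1 : ((l.reverse.map fun p : G × ℝ => (p.1⁻¹, p.2)).map Prod.fst) =
        ((l.map Prod.fst).map fun x => x⁻¹).reverse := by
      simp [List.map_map, List.map_reverse, Function.comp]
    rw [h1, ← List.prod_inv_reverse, hp]
  · have h1 : ((l.reverse.map fun p : G × ℝ => (p.1⁻¹, p.2)).map Prod.snd) =
        (l.map Prod.snd).reverse := by
      simp [List.map_map, List.map_reverse, Function.comp]
    rw [h1, List.sum_reverse, hs]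

lemma ell_inv_eq (hnn : ∀ p ∈ S, 0 ≤ p.2) (hcover : ∀ u : G, ∃ c : ℝ, (u, c) ∈ S)
    (hinv : ∀ p ∈ S, (p.1⁻¹, p.2) ∈ S) (u : G) : ell S u⁻¹ = ell S u := by
  have key : ∀ v : G, ell S v⁻¹ ≤ ell S v := fun v =>
    csInf_le_csInf (costs_bddBelow hnn _) (costs_nonempty hcover v) (costs_inv_subset hinv v)
  refine le_antisymm (key u) ?_
  have := key u⁻¹
  rwa [inv_inv] at this

end Plain

section Topo
variable {G : Type*} [Group G] [TopologicalSpace G] [IsTopologicalGroup G]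


lemma exists_symm_cube (W : Set G) (hW : W ∈ 𝓝 (1:G)) :
    ∃ O : Set G, IsOpen O ∧ (1:G) ∈ O ∧ O⁻¹ = O ∧ O * O * O ⊆ W ∧ O ∈ 𝓝 (1:G) := by
  obtain ⟨O₁, hO₁open, hO₁mem, hO₁⟩ := exists_open_nhds_one_mul_subset hW
  obtain ⟨O₂, hO₂open, hO₂mem, hO₂⟩ :=
    exists_open_nhds_one_mul_subset (hO₁open.mem_nhds hO₁mem)
  refine ⟨O₂ ∩ O₂⁻¹, hO₂open.inter hO₂open.inv, ⟨hO₂mem, by simpa using hO₂mem⟩, ?_, ?_, ?_⟩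
  · simp [Set.inter_comm, Set.inter_inv]
  · have hsub : O₂ ∩ O₂⁻¹ ⊆ O₂ := Set.inter_subset_left
    have hO₂O₁ : O₂ ⊆ O₁ := fun o ho =>
      hO₂ (by simpa using Set.mul_mem_mul ho hO₂mem)
    calc (O₂ ∩ O₂⁻¹) * (O₂ ∩ O₂⁻¹) * (O₂ ∩ O₂⁻¹)
        ⊆ O₂ * O₂ * O₂ := Set.mul_subset_mul (Set.mul_subset_mul hsub hsub) hsub
      _ ⊆ O₁ * O₂ := Set.mul_subset_mul hO₂ subset_rfl
      _ ⊆ O₁ * O₁ := Set.mul_subset_mul subset_rfl hO₂O₁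
      _ ⊆ W := hO₁
  · exact (hO₂open.inter hO₂open.inv).mem_nhds ⟨hO₂mem, by simpa using hO₂mem⟩

lemma exists_U [FirstCountableTopology G] [T1Space G]
    (V : Set G) (hV : IsOpen V) (h1 : (1:G) ∈ V) :
    ∃ U : ℕ → Set G, (∀ n, IsOpen (U n)) ∧ (∀ n, (1:G) ∈ U n) ∧ (∀ n, (U n)⁻¹ = U n) ∧
      (∀ n, U (n+1) * U (n+1) * U (n+1) ⊆ U n) ∧ U 0 ⊆ V ∧
      (∀ n, U (n+1) ⊆ U n) ∧ (∀ s ∈ 𝓝 (1:G), ∃ n, U n ⊆ s) ∧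
      (∀ u : G, (∀ n, u ∈ U n) → u = 1) := by
  classical
  obtain ⟨b, hb⟩ := (𝓝 (1:G)).exists_antitone_basis
  have hbmem : ∀ n, b n ∈ 𝓝 (1:G) := fun n => hb.1.mem_of_mem trivial
  have hstep : ∀ W : Set G, ∃ O : Set G, W ∈ 𝓝 (1:G) →
      (IsOpen O ∧ (1:G) ∈ O ∧ O⁻¹ = O ∧ O * O * O ⊆ W ∧ O ∈ 𝓝 (1:G)) := by
    intro W
    by_cases hW : W ∈ 𝓝 (1:G)
    · obtain ⟨O, h⟩ := exists_symm_cube W hW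
      exact ⟨O, fun _ => h⟩
    · exact ⟨∅, fun h => absurd h hW⟩
  choose f hf using hstep
  set U : ℕ → Set G := fun n => Nat.rec (f (V ∩ b 0)) (fun n Un => f (Un ∩ b (n+1))) n
    with hU
  have hU0 : U 0 = f (V ∩ b 0) := rfl
  have hUsucc : ∀ n, U (n+1) = f (U n ∩ b (n+1)) := fun n => rfl
  have hmain : ∀ n, (U n ∈ 𝓝 (1:G)) ∧ IsOpen (U n) ∧ (1:G) ∈ U n ∧ (U n)⁻¹ = U n ∧
      (U n * U n * U n ⊆ (if h : n = 0 then V ∩ b 0 else U (n-1) ∩ b n)) := by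
    intro n
    induction n with
    | zero =>
        have hmem : V ∩ b 0 ∈ 𝓝 (1:G) := Filter.inter_mem (hV.mem_nhds h1) (hbmem 0)
        obtain ⟨ho, hm, hs, hc, hn⟩ := hf (V ∩ b 0) hmem
        exact ⟨hn, ho, hm, hs, by rw [dif_pos rfl]; exact hc⟩
    | succ n ih =>
        have hmem : U n ∩ b (n+1) ∈ 𝓝 (1:G) := Filter.inter_mem ih.1 (hbmem (n+1))
        obtain ⟨ho, hm, hs, hc, hn⟩ := hf (U n ∩ b (n+1)) hmem
        rw [← hUsucc n] at *
        exact ⟨hn, ho, hm, hs, by simpa using hc⟩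
  have hself : ∀ n, U n ⊆ U n * U n * U n := by
    intro n u hu
    have := Set.mul_mem_mul (Set.mul_mem_mul hu (hmain n).2.2.1) (hmain n).2.2.1
    simpa using this
  have hcube : ∀ n, U (n+1) * U (n+1) * U (n+1) ⊆ U n := by
    intro n
    have := (hmain (n+1)).2.2.2.2
    simp only [Nat.succ_ne_zero, dif_neg, Nat.add_sub_cancel] at this
    exact this.trans Set.inter_subset_left
  have hUb : ∀ n, U n ⊆ b n := by
    intro n
    cases n with
    | zero => exact (hself 0).trans (((hmain 0).2.2.2.2).trans (by simp))
    | succ n =>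
        have := (hmain (n+1)).2.2.2.2
        simp only [Nat.succ_ne_zero, dif_neg, Nat.add_sub_cancel] at this
        exact (hself (n+1)).trans (this.trans Set.inter_subset_right)
  refine ⟨U, fun n => (hmain n).2.1, fun n => (hmain n).2.2.1, fun n => (hmain n).2.2.2.1,
    hcube, ?_, ?_, ?_, ?_⟩
  · exact (hself 0).trans (((hmain 0).2.2.2.2).trans (by simp))
  · exact fun n => (hself (n+1)).trans ((hcube n))
  · intro s hs
    obtain ⟨n, -, hn⟩ := hb.1.mem_iff.1 hs
    exact ⟨n, (hUb n).trans hn⟩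
  · intro u hu
    by_contra hne
    have : {u}ᶜ ∈ 𝓝 (1:G) := compl_singleton_mem_nhds (Ne.symm hne)
    obtain ⟨n, -, hn⟩ := hb.1.mem_iff.1 this
    exact (hn ((hUb n) (hu n))) rfl
end Topo
end RelOB

namespace RelOB
section Main
variable {G : Type*} [Group G] [TopologicalSpace G] [IsTopologicalGroup G]

lemma pow_subset_pow_of_one_mem {T : Set G} (hT : (1:G) ∈ T) {j k : ℕ} (h : j ≤ k) :
    T ^ j ⊆ T ^ k := by
  induction h with
  | refl => exact subset_rfl
  | step _ ih =>
      rw [pow_succ]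
      exact fun x hx => by simpa using Set.mul_mem_mul (ih hx) hT

/-- Forward direction: a set covered by `(F V)^k` for every `V` is bounded in every
compatible left-invariant metric. -/
lemma finiteDiam_of_cover (A : Set G)
    (h : ∀ V : Set G, IsOpen V → (1 : G) ∈ V →
      ∃ F : Set G, F.Finite ∧ ∃ k : ℕ, 1 ≤ k ∧ A ⊆ (F * V) ^ k)
    (d : G → G → ℝ) (hd : IsCompatibleLeftInvariantMetric G d) : FiniteDiam d A := by
  obtain ⟨⟨heq, hsymm, htri⟩, hcompat, hinv⟩ := hd
  have hself : ∀ x : G, d x x = 0 := fun x => (heq x x).2 rfl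
  have hnonneg : ∀ x y : G, 0 ≤ d x y := by
    intro x y
    have := htri x y x
    rw [hself x, hsymm y x] at this
    linarith
  -- the unit ball around 1 is open
  set V : Set G := {y | d 1 y < 1} with hV
  have hVopen : IsOpen V := by
    rw [isOpen_iff_mem_nhds]
    intro y hy
    rw [hcompat y V]
    refine ⟨1 - d 1 y, by have hy' : d 1 y < 1 := hy; linarith, fun w hw => ?_⟩
    have : d 1 w ≤ d 1 y + d y w := htri 1 y w
    simp only [Set.mem_setOf_eq] at hw ⊢
    rw [hV]
    simp only [Set.mem_setOf_eq]
    linarith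
  have hV1 : (1:G) ∈ V := by simp [hV, hself]
  obtain ⟨F, hF, k, hk, hsub⟩ := h V hVopen hV1
  obtain ⟨M, hM⟩ := (hF.image (d 1)).bddAbove
  have hMb : ∀ f ∈ F, d 1 f ≤ M := fun f hf => hM (Set.mem_image_of_mem _ hf)
  have hpow : ∀ (m : ℕ), ∀ x ∈ (F * V) ^ m, d 1 x ≤ m * (M + 1) := by
    intro m
    induction m with
    | zero =>
        intro x hx
        rw [pow_zero] at hx
        rw [Set.mem_one] at hx
        subst hx
        simp [hself]
    | succ m ih =>
        intro x hx
        rw [pow_succ] at hx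
        obtain ⟨y, hy, t, ht, rfl⟩ := Set.mem_mul.1 hx
        obtain ⟨f, hf, v, hv, rfl⟩ := Set.mem_mul.1 ht
        have h1 : d 1 (y * (f * v)) ≤ d 1 y + d y (y * (f * v)) := htri _ _ _
        have h2 : d y (y * (f * v)) = d 1 (f * v) := by
          have := hinv y 1 (f * v)
          rwa [mul_one] at this
        have h3 : d 1 (f * v) ≤ d 1 f + d f (f * v) := htri _ _ _
        have h4 : d f (f * v) = d 1 v := by
          have := hinv f 1 v
          rwa [mul_one] at this
        have h5 : d 1 v < 1 := hv
        have h6 := ih y hy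
        push_cast
        rw [h2] at h1
        rw [h4] at h3
        have h7 := hMb f hf
        nlinarith [hnonneg 1 y]
  refine ⟨2 * k * (M + 1), fun x hx y hy => ?_⟩
  have h1 : d x y ≤ d x 1 + d 1 y := htri _ _ _
  have h2 : d x 1 = d 1 x := hsymm x 1
  have h3 := hpow k x (hsub hx)
  have h4 := hpow k y (hsub hy)
  rw [h2] at h1
  nlinarith

end Main
end RelOB
namespace RelOB
section Bad
variable {G : Type*} [Group G] [TopologicalSpace G] [IsTopologicalGroup G]
  [TopologicalSpace.MetrizableSpace G] [TopologicalSpace.SeparableSpace G]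

lemma not_relOB_of_bad (A : Set G) (V : Set G) (hVopen : IsOpen V) (hV1 : (1:G) ∈ V)
    (hbad : ∀ F : Set G, F.Finite → ∀ k : ℕ, 1 ≤ k → ¬ A ⊆ (F * V) ^ k) :
    ¬ HasRelPropOB G A := by
  classical
  intro hOB
  haveI : Nonempty G := ⟨1⟩
  obtain ⟨U, hUopen, hUone, hUsymm, hUcube, hUV, hUmono, hUbasis, hUsep⟩ :=
    exists_U V hVopen hV1
  have hUmono' : ∀ {m n : ℕ}, m ≤ n → U n ⊆ U m := by
    intro m n hmn
    induction hmn with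
    | refl => exact subset_rfl
    | step _ ih => exact (hUmono _).trans ih
  set z : ℕ → G := TopologicalSpace.denseSeq G with hzdef
  have hz : DenseRange z := TopologicalSpace.denseRange_denseSeq G
  set S : Set (G × ℝ) := {p | (∃ n, p.1 ∈ U n ∧ p.2 = (1/2:ℝ)^(n+1)) ∨
      (∃ n : ℕ, p.2 = (n:ℝ)+1 ∧ ∃ w ∈ U 0, p.1 = z n * w ∨ p.1 = w * (z n)⁻¹)} with hS
  have hmemiff : ∀ (v : G) (n : ℕ), v ∈ U n ↔ v⁻¹ ∈ U n := by
    intro v n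
    constructor
    · intro h; rw [← hUsymm n]; exact Set.inv_mem_inv.2 h
    · intro h; rw [← hUsymm n] at h; simpa using h
  have hgood : ∀ p ∈ S, 0 ≤ p.2 ∧ rho U p.1 ≤ p.2 := by
    rintro p (⟨n, hU, hc⟩ | ⟨n, hc, w, hw, hform⟩)
    · exact ⟨by rw [hc]; positivity, by rw [hc]; exact rho_le_of_mem hU⟩
    · refine ⟨by rw [hc]; positivity, ?_⟩
      rw [hc]
      have h1 : (0:ℝ) ≤ (n:ℝ) := Nat.cast_nonneg n
      linarith [rho_le_one U p.1]
  have hnn : ∀ p ∈ S, 0 ≤ p.2 := fun p hp => (hgood p hp).1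
  have hinv : ∀ p ∈ S, (p.1⁻¹, p.2) ∈ S := by
    rintro p (⟨n, hU, hc⟩ | ⟨n, hc, w, hw, (heq | heq)⟩)
    · exact Or.inl ⟨n, (hmemiff p.1 n).1 hU, hc⟩
    · exact Or.inr ⟨n, hc, w⁻¹, (hmemiff w 0).1 hw, Or.inr (by rw [heq, mul_inv_rev])⟩
    · exact Or.inr ⟨n, hc, w⁻¹, (hmemiff w 0).1 hw,
        Or.inl (by rw [heq, mul_inv_rev, inv_inv])⟩
  have hcover : ∀ u : G, ∃ c : ℝ, (u, c) ∈ S := by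
    intro u
    have hopen : IsOpen (u • U 0) := (hUopen 0).smul u
    have hne : (u • U 0).Nonempty := ⟨u, ⟨1, hUone 0, by simp⟩⟩
    obtain ⟨n, hn⟩ := hz.exists_mem_open hopen hne
    obtain ⟨w, hw, hwu⟩ := hn
    refine ⟨(n:ℝ) + 1, Or.inr ⟨n, rfl, w⁻¹, (hmemiff w 0).1 hw, Or.inl ?_⟩⟩
    have : u * w = z n := by simpa [smul_eq_mul] using hwu
    rw [eq_mul_inv_iff_mul_eq]
    exact this
  have hrholow : ∀ u : G, rho U u ≤ 2 * ell S u := by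
    intro u
    have h2 : rho U u / 2 ≤ ell S u := by
      refine le_csInf (costs_nonempty hcover u) fun c hc => ?_
      obtain ⟨l, hl, hp, rfl⟩ := hc
      have := rho_prod_le hUmono hUsep hUone hUcube l.length l le_rfl
        (fun p hp => hgood p (hl p hp))
      rw [hp] at this
      linarith
    linarith
  set d : G → G → ℝ := fun g h => ell S (g⁻¹ * h) with hd
  have hell_nonneg : ∀ u : G, 0 ≤ ell S u := ell_nonneg hnn hcover
  have hdmetric : IsMetric d := by
    refine ⟨?_, ?_, ?_⟩
    · intro x y
      constructor
      · intro h0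
        have : rho U (x⁻¹ * y) ≤ 0 := by
          have := hrholow (x⁻¹ * y)
          simp only [hd] at h0
          rw [h0] at this
          linarith
        have := eq_one_of_rho_eq_zero hUmono hUsep this
        exact inv_mul_eq_one.1 this
      · rintro rfl
        simp only [hd, inv_mul_cancel]
        exact ell_one_eq_zero hnn hcover
    · intro x y
      show ell S (x⁻¹ * y) = ell S (y⁻¹ * x)
      have : y⁻¹ * x = (x⁻¹ * y)⁻¹ := by group
      rw [this, ell_inv_eq hnn hcover hinv]
    · intro x y a
      show ell S (x⁻¹ * a) ≤ ell S (x⁻¹ * y) + ell S (y⁻¹ * a)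
      have : x⁻¹ * a = (x⁻¹ * y) * (y⁻¹ * a) := by group
      rw [this]
      exact ell_mul_le hnn hcover _ _
  have hdinv : ∀ h g f : G, d (h * g) (h * f) = d g f := by
    intro h g f
    show ell S ((h * g)⁻¹ * (h * f)) = ell S (g⁻¹ * f)
    congr 1
    group
  have hdcompat : IsCompatible G d := by
    intro x s
    constructor
    · intro hs
      have hs' : (fun y => x * y) ⁻¹' s ∈ 𝓝 (1:G) := by
        rw [← map_mul_left_nhds_one x] at hs
        exact mem_map.1 hs
      obtain ⟨n, hn⟩ := hUbasis _ hs'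
      refine ⟨(1/2:ℝ)^(n+2), by positivity, fun y hy => ?_⟩
      simp only [Set.mem_setOf_eq] at hy
      have h1 : rho U (x⁻¹ * y) < (1/2:ℝ)^(n+1) := by
        have h2 := hrholow (x⁻¹ * y)
        have : (2:ℝ) * ((1/2:ℝ)^(n+2)) = (1/2:ℝ)^(n+1) := by ring
        simp only [hd] at hy
        nlinarith
      have h3 : x⁻¹ * y ∈ U (n+1) := mem_of_rho_lt hUmono h1
      have h4 : x⁻¹ * y ∈ U n := hUmono n h3
      have := hn h4
      simpa using this
    · rintro ⟨ε, hε, hball⟩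
      obtain ⟨m, hm⟩ := exists_pow_lt_of_lt_one hε (by norm_num : (1/2:ℝ) < 1)
      refine mem_nhds_iff.2 ⟨x • U m, ?_, (hUopen m).smul x, ⟨1, hUone m, by simp⟩⟩
      intro y hy
      obtain ⟨u, hu, rfl⟩ := hy
      refine hball ?_
      simp only [Set.mem_setOf_eq, hd, smul_eq_mul]
      have h1 : x⁻¹ * (x * u) = u := by group
      rw [h1]
      have h2 : ell S u ≤ (1/2:ℝ)^(m+1) :=
        ell_le_of_mem hnn (Or.inl ⟨m, hu, rfl⟩)
      have h3 : ((1:ℝ)/2)^(m+1) ≤ (1/2:ℝ)^m :=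
        pow_le_pow_of_le_one (by norm_num) (by norm_num) (Nat.le_succ m)
      linarith
  obtain ⟨C, hC⟩ := hOB d ⟨hdmetric, hdcompat, hdinv⟩
  have hAne : A.Nonempty := by
    rcases A.eq_empty_or_nonempty with rfl | h
    · exact absurd (Set.empty_subset _) (hbad {1} (Set.finite_singleton 1) 1 le_rfl)
    · exact h
  obtain ⟨a₀, ha₀⟩ := hAne
  set M : ℝ := ell S a₀ + C with hM
  have hMa : ∀ a ∈ A, ell S a ≤ M := by
    intro a ha
    have h1 : d a₀ a ≤ C := hC a₀ ha₀ a ha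
    have h2 : ell S a = d 1 a := by simp [hd]
    have h3 : d 1 a ≤ d 1 a₀ + d a₀ a := hdmetric.2.2 1 a₀ a
    have h4 : d 1 a₀ = ell S a₀ := by simp [hd]
    rw [h2]
    linarith
  have hM0 : 0 ≤ M := le_trans (hell_nonneg a₀) (by
    have := hC a₀ ha₀ a₀ ha₀
    have h0 : d a₀ a₀ = 0 := (hdmetric.1 a₀ a₀).2 rfl
    rw [h0] at this
    linarith)
  set N : ℕ := ⌈M + 1⌉₊ with hN
  have hNM : M + 1 ≤ (N:ℝ) := Nat.le_ceil _
  set F : Set G := ({(1:G)} ∪ z '' Set.Iic N) ∪ (fun i => (z i)⁻¹) '' Set.Iic N with hF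
  have hFfin : F.Finite :=
    (((Set.finite_singleton _).union ((Set.finite_Iic N).image z)).union
      ((Set.finite_Iic N).image _))
  set T : Set G := F * V with hT
  have h1F : (1:G) ∈ F := Or.inl (Or.inl rfl)
  have h1T : (1:G) ∈ T := ⟨1, h1F, 1, hV1, mul_one 1⟩
  have hzF : ∀ n : ℕ, n ≤ N → z n ∈ F := fun n hn => Or.inl (Or.inr ⟨n, hn, rfl⟩)
  have hzinvF : ∀ n : ℕ, n ≤ N → (z n)⁻¹ ∈ F := fun n hn => Or.inr ⟨n, hn, rfl⟩
  have hVT : ∀ v ∈ V, v ∈ T := fun v hv => ⟨1, h1F, v, hv, one_mul v⟩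
  have hU0T : ∀ v ∈ U 0, v ∈ T := fun v hv => hVT v (hUV hv)
  have hmulmem : ∀ {i j : ℕ} {a b : G}, a ∈ T^i → b ∈ T^j → a * b ∈ T^(i+j) := by
    intro i j a b ha hb
    rw [pow_add]
    exact Set.mul_mem_mul ha hb
  -- pending sets
  set Pend : ℝ → Set G := fun r => {p | ∃ lp : List (G × ℝ),
    (∀ x ∈ lp, ∃ n, x.1 ∈ U n ∧ x.2 = (1/2:ℝ)^(n+1)) ∧
    (lp.map Prod.fst).prod = p ∧ (lp.map Prod.snd).sum ≤ r} with hPend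
  have hPone : ∀ r : ℝ, 0 ≤ r → (1:G) ∈ Pend r := fun r hr => ⟨[], by simp, by simp, by simpa⟩
  have hflush : ∀ (r : ℝ) (p : G), r < 1/4 → p ∈ Pend r → p ∈ T := by
    rintro r p hr ⟨lp, hlp, hprod, hsum⟩
    have hbk := rho_prod_le hUmono hUsep hUone hUcube lp.length lp le_rfl (by
      rintro x hx
      obtain ⟨n, hU, hc⟩ := hlp x hx
      exact ⟨by rw [hc]; positivity, by rw [hc]; exact rho_le_of_mem hU⟩)
    rw [hprod] at hbk
    have h1 : rho U p < (1/2:ℝ)^1 := by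
      have : ((1:ℝ)/2)^1 = 1/2 := by norm_num
      rw [this]
      linarith
    have h2 : p ∈ U 1 := mem_of_rho_lt hUmono h1
    exact hU0T p (hUmono 0 h2)
  -- the accounting induction
  have account : ∀ l : List (G × ℝ), (∀ p ∈ l, p ∈ S ∧ p.2 ≤ (N:ℝ)) →
      ∃ (j : ℕ) (r : ℝ) (p q : G), (l.map Prod.fst).prod = p * q ∧ q ∈ T ^ j ∧
        0 ≤ r ∧ r < 1/4 ∧ p ∈ Pend r ∧ (j:ℝ) ≤ 16 * ((l.map Prod.snd).sum - r) := by
    intro l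
    induction l with
    | nil =>
        intro _
        exact ⟨0, 0, 1, 1, by simp, by simp [Set.mem_one], le_rfl, by norm_num,
          hPone 0 le_rfl, by simp⟩
    | cons x l ih =>
        intro hl
        obtain ⟨j, r, p, q, hprod, hq, hr0, hr4, hp, hjr⟩ :=
          ih (fun p hp => hl p (List.mem_cons_of_mem x hp))
        have hxS := (hl x (List.mem_cons_self (a := x) (l := l))).1
        have hxN := (hl x (List.mem_cons_self (a := x) (l := l))).2
        have hpT : p ∈ T := hflush r p hr4 hp
        have hsum : ((x :: l).map Prod.snd).sum = x.2 + (l.map Prod.snd).sum := by simp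
        have hprodc : ((x :: l).map Prod.fst).prod = x.1 * (p * q) := by
          simp only [List.map_cons, List.prod_cons, hprod]
        rcases hxS with ⟨n, hUn, hc⟩ | ⟨n, hc, w, hw, hform⟩
        · -- type (i) letter
          have hcpos : 0 < x.2 := by rw [hc]; positivity
          by_cases hrc : r + x.2 < 1/4
          · -- absorb into pending
            refine ⟨j, r + x.2, x.1 * p, q, by rw [hprodc, mul_assoc], hq,
              by linarith, hrc, ?_, by rw [hsum]; linarith⟩
            obtain ⟨lp, hlp, hpp, hps⟩ := hp
            refine ⟨x :: lp, ?_, by simp [hpp], by simp; linarith⟩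
            intro y hy
            rcases List.mem_cons.1 hy with rfl | hy
            · exact ⟨n, hUn, hc⟩
            · exact hlp y hy
          · -- flush pending and the letter
            push_neg at hrc
            have hxT : x.1 ∈ T := hU0T x.1 (hUmono' (Nat.zero_le n) hUn)
            refine ⟨j + 2, 0, 1, x.1 * (p * q), by rw [hprodc, one_mul], ?_,
              le_rfl, by norm_num, hPone 0 le_rfl, ?_⟩
            · have h1 : p * q ∈ T^(1+j) := hmulmem (by simpa [pow_one] using hpT) hq
              have h2 : x.1 * (p * q) ∈ T^(1+(1+j)) :=
                hmulmem (by simpa [pow_one] using hxT) h1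
              have : 1 + (1 + j) = j + 2 := by omega
              rwa [this] at h2
            · rw [hsum]
              push_cast
              linarith
        · -- type (ii) letter
          have hc1 : (1:ℝ) ≤ x.2 := by
            rw [hc]
            have : (0:ℝ) ≤ (n:ℝ) := Nat.cast_nonneg n
            linarith
          have hnN : n ≤ N := by
            have : (n:ℝ) + 1 ≤ (N:ℝ) := by rw [← hc]; exact hxN
            exact_mod_cast (by linarith : (n:ℝ) ≤ (N:ℝ))
          have hxTT : x.1 ∈ T^2 := by
            rcases hform with heq | heq
            · have h1 : z n * w ∈ T := ⟨z n, hzF n hnN, w, hUV hw, rfl⟩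
              have h2 := hmulmem (i := 1) (j := 1) (by simpa [pow_one] using h1)
                (by simpa [pow_one] using h1T)
              rw [heq]
              simpa using h2
            · have h1 : w ∈ T := hU0T w hw
              have h2 : (z n)⁻¹ ∈ T := ⟨(z n)⁻¹, hzinvF n hnN, 1, hV1, mul_one _⟩
              have h3 := hmulmem (i := 1) (j := 1) (by simpa [pow_one] using h1)
                (by simpa [pow_one] using h2)
              rw [heq]
              simpa using h3
          refine ⟨j + 3, 0, 1, x.1 * (p * q), by rw [hprodc, one_mul], ?_,
            le_rfl, by norm_num, hPone 0 le_rfl, ?_⟩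
          · have h1 : p * q ∈ T^(1+j) := hmulmem (by simpa [pow_one] using hpT) hq
            have h2 : x.1 * (p * q) ∈ T^(2+(1+j)) := hmulmem hxTT h1
            have : 2 + (1 + j) = j + 3 := by omega
            rwa [this] at h2
          · rw [hsum]
            push_cast
            linarith
  -- conclude: A is covered by T ^ (16 N + 1), contradiction
  set k : ℕ := 16 * N + 1 with hk
  refine hbad F hFfin k (by omega) ?_
  intro a ha
  have hEa : ell S a < M + 1 := lt_of_le_of_lt (hMa a ha) (by linarith)
  obtain ⟨c, hc, hclt⟩ := (csInf_lt_iff (costs_bddBelow hnn a) (costs_nonempty hcover a)).1 hEa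
  obtain ⟨l, hl, hprod, hcsum⟩ := hc
  have hsum_lt : (l.map Prod.snd).sum < M + 1 := by rw [hcsum]; exact hclt
  have hlet : ∀ p ∈ l, p ∈ S ∧ p.2 ≤ (N:ℝ) := by
    intro p hp
    refine ⟨hl p hp, ?_⟩
    have h1 : p.2 ≤ (l.map Prod.snd).sum := List.single_le_sum (by
      intro b hb
      obtain ⟨q, hq, rfl⟩ := List.mem_map.1 hb
      exact hnn q (hl q hq)) _ (List.mem_map_of_mem (f := Prod.snd) hp)
    linarith
  obtain ⟨j, r, p, q, hpq, hq, hr0, hr4, hp, hjr⟩ := account l hlet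
  have hpT : p ∈ T := hflush r p hr4 hp
  have haT : a ∈ T^(1+j) := by
    rw [← hprod, hpq]
    exact hmulmem (by simpa [pow_one] using hpT) hq
  have hjk : 1 + j ≤ k := by
    have h1 : (j:ℝ) ≤ 16 * (M + 1) := by
      have : (l.map Prod.snd).sum - r ≤ M + 1 := by linarith
      linarith
    have h2 : (j:ℝ) ≤ 16 * (N:ℝ) := by linarith
    have h3 : j ≤ 16 * N := by exact_mod_cast h2
    omega
  exact pow_subset_pow_of_one_mem h1T hjk haT

end Bad
end RelOB

theorem relOB_iff_covered_by_FV_pow {G : Type*} [Group G]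
    [TopologicalSpace G] [IsTopologicalGroup G] [TopologicalSpace.MetrizableSpace G]
    [TopologicalSpace.SeparableSpace G] (A : Set G) :
    HasRelPropOB G A ↔
      ∀ V : Set G, IsOpen V → (1 : G) ∈ V →
        ∃ F : Set G, F.Finite ∧ ∃ k : ℕ, 1 ≤ k ∧ A ⊆ (F * V) ^ k := by
  constructor
  · intro hOB V hVopen hV1
    by_contra hcon
    push_neg at hcon
    exact RelOB.not_relOB_of_bad A V hVopen hV1
      (fun F hF k hk => hcon F hF k hk) hOB
  · intro h d hd
    exact RelOB.finiteDiam_of_cover A h d hd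
end

section
/- Let H = G_1 × G_2 × ⋯ be the product of a sequence of metrisable topological groups G_n, equipped with the product topology. A subset A ⊆ H has property (OB) relative to H if and only if A is contained in a product B_1 × B_2 × ⋯ of subsets B_n ⊆ G_n, each having property (OB) relative to G_n. -/
open Filter Topology
open scoped Pointwise

lemma min_add_one_le {a b : ℝ} (ha : 0 ≤ a) (hb : 0 ≤ b) :
    min (a + b) 1 ≤ min a 1 + min b 1 := by
  rcases le_or_gt 1 a with h | h
  · calc min (a+b) 1 ≤ 1 := min_le_right _ _
      _ ≤ min a 1 + min b 1 := by
        rw [min_eq_right h]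
        have : (0:ℝ) ≤ min b 1 := le_min hb zero_le_one
        linarith
  rcases le_or_gt 1 b with h' | h'
  · calc min (a+b) 1 ≤ 1 := min_le_right _ _
      _ ≤ min a 1 + min b 1 := by
        rw [min_eq_right h']
        have : (0:ℝ) ≤ min a 1 := le_min ha zero_le_one
        linarith
  · rw [min_eq_left h.le, min_eq_left h'.le]
    exact min_le_left _ _

lemma exists_CLIM (G : Type*) [Group G] [TopologicalSpace G] [IsTopologicalGroup G]
    [FirstCountableTopology G] [T1Space G] :
    ∃ d : G → G → ℝ, IsCompatibleLeftInvariantMetric G d := by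
  classical
  -- Step 1: a pseudometric inducing the right uniformity
  have hU : @uniformity G (IsTopologicalGroup.rightUniformSpace G)
      = comap (fun p : G × G => p.2 / p.1) (𝓝 1) := by
    simp_rw [div_eq_mul_inv]; rfl
  haveI hcg : (@uniformity G (IsTopologicalGroup.rightUniformSpace G)).IsCountablyGenerated := by
    rw [hU]; infer_instance
  obtain ⟨m, hm⟩ := @UniformSpace.metrizable_uniformity G (IsTopologicalGroup.rightUniformSpace G) hcg
  set D : G → G → ℝ := @dist G m.toDist with hD
  have Dself : ∀ a, D a a = 0 := @dist_self G m
  have Dcomm : ∀ a b, D a b = D b a := @dist_comm G m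
  have Dtri : ∀ a b c, D a c ≤ D a b + D b c := @dist_triangle G m
  have Dnonneg : ∀ a b, 0 ≤ D a b := @dist_nonneg G m
  have hUm : @uniformity G m.toUniformSpace = comap (fun p : G × G => p.2 / p.1) (𝓝 1) := by
    rw [hm]; exact hU
  have fact_a : ∀ ε > (0:ℝ), ∃ V ∈ 𝓝 (1:G), ∀ a b : G, b / a ∈ V → D a b < ε := by
    intro ε hε
    have h1 : {p : G × G | D p.1 p.2 < ε} ∈ @uniformity G m.toUniformSpace :=
      @Metric.dist_mem_uniformity G m ε hε
    rw [hUm, Filter.mem_comap] at h1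
    obtain ⟨V, hV, hsub⟩ := h1
    refine ⟨V, hV, fun a b hab => ?_⟩
    have : (a, b) ∈ {p : G × G | D p.1 p.2 < ε} := hsub hab
    exact this
  have fact_b : ∀ V ∈ 𝓝 (1:G), ∃ ε > (0:ℝ), ∀ a b : G, D a b < ε → b / a ∈ V := by
    intro V hV
    have h1 : (fun p : G × G => p.2 / p.1) ⁻¹' V ∈ @uniformity G m.toUniformSpace := by
      rw [hUm]; exact Filter.preimage_mem_comap hV
    rw [@Metric.mem_uniformity_dist G m] at h1
    obtain ⟨ε, hε, h⟩ := h1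
    exact ⟨ε, hε, fun a b hab => h hab⟩
  -- zero distance implies equal
  have Dzero : ∀ a b : G, D a b = 0 → a = b := by
    intro a b hab
    have : ∀ V ∈ 𝓝 (1:G), b / a ∈ V := by
      intro V hV
      obtain ⟨ε, hε, h⟩ := fact_b V hV
      exact h a b (by rw [hab]; exact hε)
    by_contra hne
    have hne' : b / a ≠ 1 := by
      intro h; exact hne (div_eq_one.mp h).symm
    have : b / a ∈ ({b / a}ᶜ : Set G) := this _ (compl_singleton_mem_nhds (Ne.symm hne'))
    exact this rfl
  -- Step 2: the left-invariant metric
  set F : G → G → G → ℝ := fun g h x => min (D (g⁻¹ * x) (h⁻¹ * x)) 1 with hF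
  have Fnonneg : ∀ g h x, 0 ≤ F g h x := fun g h x => le_min (Dnonneg _ _) zero_le_one
  have Fbdd : ∀ g h : G, BddAbove (Set.range (F g h)) := by
    intro g h
    exact ⟨1, by rintro _ ⟨x, rfl⟩; exact min_le_right _ _⟩
  set d : G → G → ℝ := fun g h => ⨆ x, F g h x with hd
  have dle : ∀ g h (c : ℝ), (∀ x, F g h x ≤ c) → d g h ≤ c := by
    intro g h c hc; exact ciSup_le hc
  have led : ∀ g h x, F g h x ≤ d g h := fun g h x => le_ciSup (Fbdd g h) x
  refine ⟨d, ⟨⟨?_, ?_, ?_⟩, ?_, ?_⟩⟩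
  · -- zero iff
    intro g h
    constructor
    · intro h0
      have h1 : F g h 1 ≤ 0 := h0 ▸ led g h 1
      have h2 : F g h 1 = 0 := le_antisymm h1 (Fnonneg g h 1)
      have h3 : D (g⁻¹ * 1) (h⁻¹ * 1) = 0 := by
        simp only [hF] at h2
        rcases le_or_gt (D (g⁻¹ * 1) (h⁻¹ * 1)) 1 with hle | hlt
        · rwa [min_eq_left hle] at h2
        · exfalso; rw [min_eq_right hlt.le] at h2; linarith
      have := Dzero _ _ h3
      rw [mul_one, mul_one] at this
      exact inv_injective this
    · rintro rfl
      have : ∀ x, F g g x = 0 := fun x => by simp only [hF]; simp [Dself]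
      rw [hd]; simp only [this]; exact ciSup_const
  · -- symm
    intro g h
    rw [hd]
    exact iSup_congr fun x => by simp only [hF]; rw [Dcomm (g⁻¹ * x)]
  · -- triangle
    intro g h k
    refine dle _ _ _ fun x => ?_
    have h1 : F g k x ≤ min (D (g⁻¹ * x) (h⁻¹ * x) + D (h⁻¹ * x) (k⁻¹ * x)) 1 :=
      min_le_min (Dtri _ _ _) le_rfl
    calc F g k x ≤ min (D (g⁻¹ * x) (h⁻¹ * x)) 1 + min (D (h⁻¹ * x) (k⁻¹ * x)) 1 :=
          h1.trans (min_add_one_le (Dnonneg _ _) (Dnonneg _ _))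
      _ ≤ d g h + d h k := add_le_add (led g h x) (led h k x)
  · -- compatible
    intro x s
    constructor
    · intro hs
      have hW : (fun g : G => x * g⁻¹) ⁻¹' s ∈ 𝓝 (1:G) := by
        have hc : Continuous (fun g : G => x * g⁻¹) := continuous_const.mul continuous_inv
        have ht : Filter.Tendsto (fun g : G => x * g⁻¹) (𝓝 1) (𝓝 x) := by
          simpa using hc.tendsto 1
        exact ht hs
      obtain ⟨ε, hε, h⟩ := fact_b _ hW
      refine ⟨min ε 1, lt_min hε one_pos, ?_⟩
      intro y hy
      simp only [Set.mem_setOf_eq] at hy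
      have h1 : F x y 1 < min ε 1 := lt_of_le_of_lt (led x y 1) hy
      have h2 : D (x⁻¹ * 1) (y⁻¹ * 1) < ε := by
        simp only [hF] at h1
        rcases le_or_gt (D (x⁻¹ * 1) (y⁻¹ * 1)) 1 with hle | hlt
        · have := lt_of_eq_of_lt (min_eq_left hle).symm h1
          exact lt_of_lt_of_le this (min_le_left _ _)
        · exfalso
          have := lt_of_eq_of_lt (min_eq_right hlt.le).symm h1
          have := lt_of_lt_of_le this (min_le_right _ _)
          exact lt_irrefl _ this
      have h5 := h _ _ h2
      rw [Set.mem_preimage] at h5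
      have heq : x * ((y⁻¹ * 1) / (x⁻¹ * 1))⁻¹ = y := by
        simp [div_eq_mul_inv, mul_assoc]
      rwa [heq] at h5
    · rintro ⟨ε, hε, hsub⟩
      obtain ⟨V, hV, h⟩ := fact_a (ε/2) (by linarith)
      have hW : (fun y : G => y⁻¹ * x) ⁻¹' V ∈ 𝓝 x := by
        have hc : Continuous (fun y : G => y⁻¹ * x) := continuous_inv.mul continuous_const
        have ht : Filter.Tendsto (fun y : G => y⁻¹ * x) (𝓝 x) (𝓝 1) := by
          simpa using hc.tendsto x
        exact ht hV
      refine Filter.mem_of_superset hW ?_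
      intro y hy
      apply hsub
      simp only [Set.mem_setOf_eq]
      have : ∀ z, F x y z ≤ ε / 2 := by
        intro z
        have hq : (y⁻¹ * z) / (x⁻¹ * z) ∈ V := by
          have heq : (y⁻¹ * z) / (x⁻¹ * z) = y⁻¹ * x := by
            simp [div_eq_mul_inv, mul_assoc]
          rw [heq]; exact hy
        have := h _ _ hq
        calc F x y z ≤ D (x⁻¹ * z) (y⁻¹ * z) := min_le_left _ _
          _ ≤ ε / 2 := this.le
      calc d x y ≤ ε / 2 := dle _ _ _ this
        _ < ε := by linarith
  · -- left-invariant
    intro f g h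
    have hfun : (fun x => F (f * g) (f * h) x) = (F g h) ∘ (fun x : G => f⁻¹ * x) := by
      funext x
      simp only [hF, Function.comp_apply, mul_inv_rev, mul_assoc]
    have hsurj : Function.Surjective (fun x : G => f⁻¹ * x) :=
      fun y => ⟨f * y, by simp⟩
    rw [hd]
    show ⨆ x, F (f*g) (f*h) x = ⨆ x, F g h x
    rw [iSup, iSup, hfun, Function.Surjective.range_comp hsurj]

lemma IsMetric.nonneg {G : Type*} {d : G → G → ℝ} (h : IsMetric d) : ∀ x y, 0 ≤ d x y := by
  intro x y
  obtain ⟨hz, hs, ht⟩ := h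
  have h1 : d x x ≤ d x y + d y x := ht x y x
  rw [(hz x x).mpr rfl, hs y x] at h1
  linarith

theorem relOB_in_product_iff_contained_in_product_of_relOB
    {G : ℕ → Type*} [∀ n, Group (G n)] [∀ n, TopologicalSpace (G n)]
    [∀ n, IsTopologicalGroup (G n)] [∀ n, TopologicalSpace.MetrizableSpace (G n)]
    (A : Set (∀ n, G n)) :
    HasRelPropOB (∀ n, G n) A ↔
      ∃ B : ∀ n, Set (G n), (∀ n, HasRelPropOB (G n) (B n)) ∧ A ⊆ Set.univ.pi B := by
  classical
  constructor
  · -- forward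
    intro hA
    refine ⟨fun n => (fun x => x n) '' A, ?_, ?_⟩
    · intro n d hd
      obtain ⟨⟨dzero, dsymm, dtri⟩, dcompat, dinv⟩ := hd
      have dnonneg := IsMetric.nonneg ⟨dzero, dsymm, dtri⟩
      obtain ⟨d₀, ⟨⟨d₀zero, d₀symm, d₀tri⟩, d₀compat, d₀inv⟩⟩ := exists_CLIM (∀ n, G n)
      have d₀nonneg := IsMetric.nonneg ⟨d₀zero, d₀symm, d₀tri⟩
      set D : (∀ m, G m) → (∀ m, G m) → ℝ := fun x y => d (x n) (y n) + d₀ x y with hD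
      have hDm : IsCompatibleLeftInvariantMetric (∀ m, G m) D := by
        refine ⟨⟨?_, ?_, ?_⟩, ?_, ?_⟩
        · intro x y
          constructor
          · intro h0
            have h1 : d₀ x y = 0 := by
              have := dnonneg (x n) (y n)
              have := d₀nonneg x y
              simp only [hD] at h0
              linarith
            exact (d₀zero x y).mp h1
          · rintro rfl
            simp only [hD, (dzero _ _).mpr rfl, (d₀zero _ _).mpr rfl, add_zero]
        · intro x y; simp only [hD, dsymm (x n), d₀symm x]
        · intro x y z
          simp only [hD]
          have := dtri (x n) (y n) (z n)
          have := d₀tri x y z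
          linarith
        · intro x s
          constructor
          · intro hs
            obtain ⟨ε, hε, hsub⟩ := (d₀compat x s).mp hs
            refine ⟨ε, hε, ?_⟩
            intro y hy
            apply hsub
            simp only [Set.mem_setOf_eq] at hy ⊢
            have := dnonneg (x n) (y n)
            simp only [hD] at hy
            linarith
          · rintro ⟨ε, hε, hsub⟩
            have hS₂ : {y : ∀ m, G m | d₀ x y < ε/2} ∈ 𝓝 x :=
              (d₀compat x _).mpr ⟨ε/2, by linarith, subset_rfl⟩
            have hball : {g : G n | d (x n) g < ε/2} ∈ 𝓝 (x n) :=
              (dcompat (x n) _).mpr ⟨ε/2, by linarith, subset_rfl⟩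
            have hS₁ : (fun y : ∀ m, G m => y n) ⁻¹' {g : G n | d (x n) g < ε/2} ∈ 𝓝 x :=
              (continuous_apply n).continuousAt.preimage_mem_nhds hball
            refine Filter.mem_of_superset (Filter.inter_mem hS₁ hS₂) ?_
            intro y hy
            apply hsub
            obtain ⟨hy1, hy2⟩ := hy
            simp only [Set.mem_preimage, Set.mem_setOf_eq] at hy1 hy2 ⊢
            simp only [hD]
            linarith
        · intro h x y
          simp only [hD]
          have h1 : (h * x) n = h n * x n := rfl
          have h2 : (h * y) n = h n * y n := rfl
          rw [h1, h2, dinv (h n), d₀inv h]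
      obtain ⟨C, hC⟩ := hA D hDm
      refine ⟨C, ?_⟩
      rintro b ⟨xb, hxb, rfl⟩ b' ⟨yb, hyb, rfl⟩
      have h1 : d (xb n) (yb n) ≤ D xb yb := by
        simp only [hD]
        have := d₀nonneg xb yb
        linarith
      exact h1.trans (hC xb hxb yb hyb)
    · intro a ha
      intro n _
      exact ⟨a, ha, rfl⟩
  · -- backward
    rintro ⟨B, hB, hsub⟩ D hD
    obtain ⟨⟨Dzero, Dsymm, Dtri⟩, Dcompat, Dinv⟩ := hD
    -- the induced metrics on the factors
    set dd : ∀ n, G n → G n → ℝ :=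
      fun n g h => D (Pi.mulSingle n g) (Pi.mulSingle n h) with hdd
    have hddm : ∀ n, IsCompatibleLeftInvariantMetric (G n) (dd n) := by
      intro n
      refine ⟨⟨?_, ?_, ?_⟩, ?_, ?_⟩
      · intro g h
        constructor
        · intro h0
          have h1 := (Dzero _ _).mp h0
          have := congrFun h1 n
          simpa using this
        · rintro rfl; exact (Dzero _ _).mpr rfl
      · intro g h; exact Dsymm _ _
      · intro g h k; exact Dtri _ _ _
      · intro g s
        constructor
        · intro hs
          have ht : (fun y : ∀ m, G m => y n) ⁻¹' s ∈ 𝓝 (Pi.mulSingle n g) := by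
            refine (continuous_apply n).continuousAt.preimage_mem_nhds ?_
            rw [Pi.mulSingle_eq_same]
            exact hs
          obtain ⟨ε, hε, hsub'⟩ := (Dcompat (Pi.mulSingle n g) _).mp ht
          refine ⟨ε, hε, ?_⟩
          intro h hh
          simp only [Set.mem_setOf_eq] at hh
          have := hsub' (show Pi.mulSingle n h ∈ _ from hh)
          simpa using this
        · rintro ⟨ε, hε, hsub'⟩
          have hball : {y : ∀ m, G m | D (Pi.mulSingle n g) y < ε} ∈ 𝓝 (Pi.mulSingle n g) :=
            (Dcompat _ _).mpr ⟨ε, hε, subset_rfl⟩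
          have hpre : (fun h : G n => Pi.mulSingle n h) ⁻¹'
              {y : ∀ m, G m | D (Pi.mulSingle n g) y < ε} ∈ 𝓝 g := by
            refine (continuous_mulSingle n).continuousAt.preimage_mem_nhds ?_
            exact hball
          exact Filter.mem_of_superset hpre hsub'
      · intro h g f
        simp only [hdd]
        rw [Pi.mulSingle_mul, Pi.mulSingle_mul, Dinv]
    choose C hC using fun n => hB n (dd n) (hddm n)
    -- finite support bound
    have Dnonneg := IsMetric.nonneg ⟨Dzero, Dsymm, Dtri⟩
    have key : ∀ s : Finset ℕ, ∀ z : ∀ m, G m,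
        D 1 z ≤ (∑ n ∈ s, D 1 (Pi.mulSingle n (z n)))
          + D 1 (fun m => if m ∈ s then 1 else z m) := by
      intro s
      induction s using Finset.induction_on with
      | empty =>
          intro z
          have : (fun m => if m ∈ (∅ : Finset ℕ) then 1 else z m) = z := by
            funext m; simp
          rw [this, Finset.sum_empty, zero_add]
      | insert a s' ha ih =>
          intro z
          set z' : ∀ m, G m := fun m => if m = a then 1 else z m with hz'
          have hsplit : z = Pi.mulSingle a (z a) * z' := by
            funext m
            by_cases hm : m = a
            · subst hm
              simp [hz', Pi.mulSingle_eq_same]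
            · simp [hz', hm, Pi.mulSingle_eq_of_ne hm]
          have h1 : D 1 z ≤ D 1 (Pi.mulSingle a (z a)) + D 1 z' := by
            have htr := Dtri 1 (Pi.mulSingle a (z a)) z
            have heq : D (Pi.mulSingle a (z a)) z = D 1 z' := by
              have h2' := Dinv (Pi.mulSingle a (z a)) 1 z'
              rw [mul_one, ← hsplit] at h2'
              exact h2'
            rw [heq] at htr
            exact htr
          have h2 := ih z'
          have hsum : ∑ n ∈ s', D 1 (Pi.mulSingle n (z' n))
              = ∑ n ∈ s', D 1 (Pi.mulSingle n (z n)) := by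
            refine Finset.sum_congr rfl fun n hn => ?_
            have hne : n ≠ a := fun h => ha (h ▸ hn)
            simp [hz', hne]
          have htail : (fun m => if m ∈ s' then 1 else z' m)
              = (fun m => if m ∈ insert a s' then 1 else z m) := by
            funext m
            by_cases hm : m ∈ s'
            · simp [hm, Finset.mem_insert_of_mem hm]
            · by_cases hma : m = a
              · subst hma
                simp [hm, hz']
              · simp [hm, hma, hz', Finset.mem_insert]
          rw [hsum, htail] at h2
          rw [Finset.sum_insert ha]
          linarith
    -- the neighbourhood of 1 with product structure
    have hball1 : {y : ∀ m, G m | D 1 y < 1} ∈ 𝓝 (1 : ∀ m, G m) :=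
      (Dcompat _ _).mpr ⟨1, one_pos, subset_rfl⟩
    rw [nhds_pi, Filter.mem_pi] at hball1
    obtain ⟨I, hIfin, t, ht, htsub⟩ := hball1
    set s : Finset ℕ := hIfin.toFinset with hs
    refine ⟨(∑ n ∈ s, C n) + 1, ?_⟩
    intro x hx y hy
    set z : ∀ m, G m := x⁻¹ * y with hz
    have hxy : D x y = D 1 z := by
      have := Dinv x 1 z
      rw [mul_one] at this
      rw [← this, hz, mul_inv_cancel_left]
    have hk := key s z
    -- bound the sum
    have hsumle : ∑ n ∈ s, D 1 (Pi.mulSingle n (z n)) ≤ ∑ n ∈ s, C n := by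
      refine Finset.sum_le_sum fun n _ => ?_
      have heq : D 1 (Pi.mulSingle n (z n)) = dd n (x n) (y n) := by
        have h1 := Dinv (Pi.mulSingle n (x n)) 1 (Pi.mulSingle n ((x n)⁻¹ * y n))
        rw [mul_one, ← Pi.mulSingle_mul, mul_inv_cancel_left] at h1
        show D 1 (Pi.mulSingle n ((x n)⁻¹ * y n)) = dd n (x n) (y n)
        rw [← h1]
      rw [heq]
      exact hC n (x n) (hsub hx n (Set.mem_univ n)) (y n) (hsub hy n (Set.mem_univ n))
    -- bound the tail
    have htailmem : (fun m => if m ∈ s then 1 else z m) ∈ Set.pi I t := by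
      intro i hi
      have : i ∈ s := (Set.Finite.mem_toFinset hIfin).mpr hi
      simp only [this, if_true]
      exact mem_of_mem_nhds (ht i)
    have htaillt : D 1 (fun m => if m ∈ s then 1 else z m) < 1 := htsub htailmem
    rw [hxy]
    linarith
end
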